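/- arXiv:1209.0018 — 3 statements merged into one kernel-verified Lean document; each statement's English description precedes it below -/
import Mathlib

section
/- As an identity of formal power series in q with integer coefficients, the product ∏_{n≥1} (1 - q^{5n})(1 - q^{5n-1})(1 - q^{5n-4}) equals the sum ∑_{k∈ℤ} (-1)^k q^{k(5k+3)/2}. -/
open PowerSeries

noncomputable instance : TopologicalSpace (PowerSeries ℤ) :=
  inferInstanceAs (TopologicalSpace ((Unit →₀ ℕ) → ℤ))

section Aux
open Polynomial Finset


/-- Gaussian binomial coefficient in base `Polynomial.X^5`, as an integer polynomial. -/
noncomputable def gb : ℕ → ℕ → Polynomial ℤ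
  | _, 0 => 1
  | 0, _+1 => 0
  | n+1, k+1 => gb n (k+1) + Polynomial.X ^ (5 * (n - k)) * gb n k

@[simp] lemma gb_zero_right (n : ℕ) : gb n 0 = 1 := by cases n <;> rfl

lemma gb_succ_succ (n k : ℕ) :
    gb (n+1) (k+1) = gb n (k+1) + Polynomial.X ^ (5 * (n - k)) * gb n k := rfl

lemma gb_eq_zero {n k : ℕ} (h : n < k) : gb n k = 0 := by
  induction n generalizing k with
  | zero => cases k with
    | zero => omega
    | succ k => rfl
  | succ n ih =>
    cases k with
    | zero => omega
    | succ k => rw [gb_succ_succ, ih (by omega), ih (by omega)]; ring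

@[simp] lemma gb_self (n : ℕ) : gb n n = 1 := by
  induction n with
  | zero => rfl
  | succ n ih => rw [gb_succ_succ, gb_eq_zero (by omega), ih]; simp

/-- `∏_{i=1}^{N} (1 - Polynomial.X^{5i})`. -/
noncomputable def poch (N : ℕ) : Polynomial ℤ := ∏ i ∈ range N, (1 - Polynomial.X ^ (5 * (i+1)))

@[simp] lemma poch_zero : poch 0 = 1 := rfl

lemma poch_succ (N : ℕ) : poch (N+1) = poch N * (1 - Polynomial.X ^ (5 * (N+1))) :=
  Finset.prod_range_succ _ _

/-- The product identity for Gaussian binomials. -/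
lemma gb_mul_poch {n k : ℕ} (h : k ≤ n) :
    gb n k * poch k * poch (n - k) = poch n := by
  induction n generalizing k with
  | zero =>
    interval_cases k
    simp
  | succ n ih =>
    rcases Nat.eq_or_lt_of_le h with rfl | hlt
    · simp
    have hk : k ≤ n := by omega
    cases k with
    | zero => simp
    | succ k =>
      have hkn : k ≤ n := by omega
      have h1 : (n+1) - (k+1) = (n - k - 1) + 1 := by omega
      have h4 : (n - k - 1) + 1 = n - k := by omega
      have e1 : gb n (k+1) * (poch k * (1 - Polynomial.X ^ (5 * (k+1)))) * poch (n-k-1) = poch n := by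
        have := ih hk
        rw [show n - (k+1) = n - k - 1 from by omega, poch_succ k] at this
        exact this
      have e2 : gb n k * poch k * (poch (n-k-1) * (1 - Polynomial.X ^ (5 * (n - k)))) = poch n := by
        have := ih hkn
        rw [show n - k = (n-k-1)+1 from by omega, poch_succ, h4] at this
        exact this
      have hq : (Polynomial.X : Polynomial ℤ) ^ (5 * (n - k)) * Polynomial.X ^ (5 * k) = Polynomial.X ^ (5 * n) := by
        rw [← pow_add]
        congr 1
        omega
      rw [gb_succ_succ, h1, poch_succ, poch_succ, h4, poch_succ]
      linear_combination (1 - Polynomial.X ^ (5 * (n - k))) * e1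
        + (Polynomial.X ^ (5 * (n - k)) * (1 - Polynomial.X ^ (5 * (k+1)))) * e2 - Polynomial.X ^ 5 * poch n * hq

/-- Triangular numbers: `tri k = k*(k-1)/2`. -/
def tri : ℕ → ℕ
  | 0 => 0
  | k+1 => tri k + k

@[simp] lemma tri_zero : tri 0 = 0 := rfl
lemma tri_succ (k : ℕ) : tri (k+1) = tri k + k := rfl

lemma two_tri (k : ℕ) : 2 * tri k = k * (k - 1) := by
  induction k with
  | zero => rfl
  | succ k ih =>
    cases k with
    | zero => rfl
    | succ k =>
      rw [tri_succ]
      simp only [Nat.add_sub_cancel] at ih ⊢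
      nlinarith [ih]

/-- The `q`-binomial theorem with base `Polynomial.X^5`, in `(ℤ[Polynomial.X])[Y]`. -/
lemma qbt (M : ℕ) :
    ∏ j ∈ range M, (1 + Polynomial.X * Polynomial.C ((Polynomial.X : Polynomial ℤ) ^ (5*j)))
      = ∑ k ∈ range (M+1),
          Polynomial.C (gb M k * (Polynomial.X : Polynomial ℤ) ^ (5 * tri k)) * Polynomial.X ^ k := by
  induction M with
  | zero => simp
  | succ M ih =>
    rw [prod_range_succ, ih, mul_add, mul_one, Finset.sum_mul]
    have hsplit : ∀ k ∈ range (M+1),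
        Polynomial.C (gb M k * (Polynomial.X : Polynomial ℤ) ^ (5 * tri k)) * Polynomial.X ^ k
          * (Polynomial.X * Polynomial.C ((Polynomial.X : Polynomial ℤ) ^ (5*M)))
        = Polynomial.C (gb M k * (Polynomial.X : Polynomial ℤ) ^ (5 * tri k + 5*M)) * Polynomial.X ^ (k+1) := by
      intro k _
      simp only [pow_add, C_mul]
      ring
    rw [Finset.sum_congr rfl hsplit]
    have h1 : ∑ k ∈ range (M+1),
        Polynomial.C (gb M k * (Polynomial.X : Polynomial ℤ) ^ (5 * tri k)) * Polynomial.X ^ k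
        = ∑ k ∈ range (M+2),
            Polynomial.C (gb M k * (Polynomial.X : Polynomial ℤ) ^ (5 * tri k)) * Polynomial.X ^ k := by
      rw [Finset.sum_range_succ (n := M+1), gb_eq_zero (by omega)]
      simp
    have h2 : ∑ k ∈ range (M+1),
        Polynomial.C (gb M k * (Polynomial.X : Polynomial ℤ) ^ (5 * tri k + 5*M)) * Polynomial.X ^ (k+1)
        = ∑ k ∈ range (M+2), (fun k => match k with
            | 0 => 0
            | k+1 => Polynomial.C (gb M k * (Polynomial.X : Polynomial ℤ) ^ (5 * tri k + 5*M)) * Polynomial.X ^ (k+1)) k := by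
      rw [Finset.sum_range_succ' (n := M+1)]
      simp
    rw [h1, h2, ← Finset.sum_add_distrib]
    refine Finset.sum_congr rfl fun k hk => ?_
    cases k with
    | zero => simp
    | succ k =>
      show Polynomial.C (gb M (k+1) * (Polynomial.X:Polynomial ℤ) ^ (5 * tri (k+1))) * Polynomial.X ^ (k+1)
          + Polynomial.C (gb M k * (Polynomial.X:Polynomial ℤ) ^ (5 * tri k + 5*M)) * Polynomial.X ^ (k+1)
        = Polynomial.C (gb (M+1) (k+1) * (Polynomial.X:Polynomial ℤ) ^ (5 * tri (k+1))) * Polynomial.X ^ (k+1)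
      have hkM : k ≤ M := by simp at hk; omega
      have he : 5 * tri k + 5*M = 5 * (M - k) + 5 * tri (k+1) := by
        rw [tri_succ]; omega
      rw [gb_succ_succ, he]
      simp only [add_mul, C_add, C_mul, pow_add]
      ring

open LaurentPolynomial

/-- Integer exponent `k(5k+3)/2`. -/
def Ez (m : ℤ) : ℤ := m * (5*m + 3) / 2

lemma two_Ez (m : ℤ) : 2 * Ez m = m * (5*m + 3) := by
  have he : (2:ℤ) ∣ m * (5*m + 3) := by
    rcases Int.even_or_odd m with ⟨t, ht⟩ | ⟨t, ht⟩ <;> subst ht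
    · exact ⟨t * (5*(t+t)+3), by ring⟩
    · exact ⟨(2*t+1) * (5*t+4), by ring⟩
  rw [Ez, Int.mul_ediv_cancel' he]

lemma Ez_nonneg (m : ℤ) : 0 ≤ Ez m := by
  have h := two_Ez m
  rcases le_or_gt 0 m with hm | hm
  · nlinarith
  · nlinarith

lemma Ez_ge (m : ℤ) : (m.natAbs : ℤ) ≤ Ez m := by
  have h := two_Ez m
  rcases le_or_gt 0 m with hm | hm
  · rw [Int.natAbs_of_nonneg hm]; nlinarith
  · rw [Int.ofNat_natAbs_of_nonpos (le_of_lt hm)]; nlinarith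

lemma tri_cast (k : ℕ) : (2:ℤ) * (tri k) = k * ((k:ℤ) - 1) := by
  cases k with
  | zero => simp [tri]
  | succ k =>
    have h := two_tri (k+1)
    simp only [Nat.add_sub_cancel] at h
    zify at h
    push_cast
    linear_combination h

lemma T_prod {α : Type*} (s : Finset α) (f : α → ℤ) :
    ∏ i ∈ s, (T (f i) : ℤ[T;T⁻¹]) = T (∑ i ∈ s, f i) := by
  induction s using Finset.cons_induction with
  | empty => simp
  | cons a s ha ih => rw [Finset.prod_cons, Finset.sum_cons, ih, ← T_add]

lemma one_sub_T (c : ℤ) : (1 - T c : ℤ[T;T⁻¹]) = -T c * (1 - T (-c)) := by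
  have h : (T c : ℤ[T;T⁻¹]) * T (-c) = 1 := by rw [← T_add, add_neg_cancel, T_zero]
  linear_combination -h

lemma sum_range_int (N : ℕ) : ∑ j ∈ range N, (j : ℤ) = tri N := by
  induction N with
  | zero => simp
  | succ N ih => rw [Finset.sum_range_succ, ih, tri_succ]; push_cast; ring

/-- The finite Jacobi-type identity in `ℤ[Polynomial.X]`. -/
lemma key_identity (N : ℕ) :
    (∏ n ∈ range N, ((1 - Polynomial.X^(5*n+1)) * (1 - Polynomial.X^(5*n+4))) : Polynomial ℤ)
      = ∑ k ∈ range (2*N+1),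
          (-1)^(N+k) * gb (2*N) k * Polynomial.X ^ (Ez ((k : ℤ) - N)).toNat := by
  apply Polynomial.toLaurent_injective
  rw [map_prod, map_sum]
  simp only [map_mul, map_sub, map_one, map_neg, map_pow, Polynomial.toLaurent_X,
    T_pow, mul_one]
  set sN : ℤ := 5 * tri N + 4*N - 5*N^2 with hsN
  have base := congrArg (Polynomial.eval₂ (Polynomial.toLaurent (R := ℤ))
      (-(T (4 - 5*N)))) (qbt (2*N))
  rw [Polynomial.eval₂_finset_prod, Polynomial.eval₂_finset_sum] at base
  simp only [Polynomial.eval₂_add, Polynomial.eval₂_one, Polynomial.eval₂_mul,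
    Polynomial.eval₂_X, Polynomial.eval₂_C, Polynomial.eval₂_pow, map_mul, map_pow,
    Polynomial.toLaurent_X, T_pow, mul_one] at base
  -- rewrite the factors of the LHS of `base`
  have hfac : ∀ j ∈ range (2*N), (1 + -T (4 - 5*(N:ℤ)) * T (↑(5*j)) : ℤ[T;T⁻¹])
      = 1 - T (5*j + 4 - 5*N) := by
    intro j _
    rw [neg_mul, ← sub_eq_add_neg, ← T_add]
    congr 2
    push_cast
    ring
  rw [Finset.prod_congr rfl hfac] at base
  -- rewrite the terms of the RHS of `base`
  have hterm : ∀ k ∈ range (2*N+1),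
      toLaurent (gb (2*N) k) * T (↑(5 * tri k)) * (-T (4 - 5*(N:ℤ)))^k
      = (-1)^k * toLaurent (gb (2*N) k) * T (5 * tri k + k * (4 - 5*N)) := by
    intro k _
    rw [neg_pow, T_pow, T_add]
    push_cast
    ring
  rw [Finset.sum_congr rfl hterm] at base
  -- split the product on the LHS of `base`
  have hsplit : (∏ j ∈ range (2*N), (1 - T (5*j + 4 - 5*N) : ℤ[T;T⁻¹]))
      = ((-1)^N * T sN) * ((∏ n ∈ range N, (1 - T (↑(5*n+1))))
          * ∏ n ∈ range N, (1 - T (↑(5*n+4)))) := by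
    rw [show 2*N = N + N from by ring, Finset.prod_range_add]
    have h2 : ∀ i ∈ range N, (1 - T (5*(↑(N+i):ℤ) + 4 - 5*(N:ℤ)) : ℤ[T;T⁻¹])
        = 1 - T (↑(5*i+4)) := by
      intro i _
      congr 2
      push_cast
      ring
    rw [Finset.prod_congr rfl h2]
    have h1 : ∀ j ∈ range N, (1 - T (5*j + 4 - 5*(N:ℤ)) : ℤ[T;T⁻¹])
        = (-1) * T (5*j + 4 - 5*N) * (1 - T (↑(5*(N-1-j)+1))) := by
      intro j hj
      simp only [Finset.mem_range] at hj
      rw [one_sub_T (5*j + 4 - 5*(N:ℤ))]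
      have hc : (↑(5*(N-1-j)+1) : ℤ) = -(5*j + 4 - 5*(N:ℤ)) := by
        push_cast [show (↑(N-1-j) : ℤ) = (N:ℤ) - 1 - j from by omega]
        ring
      rw [hc]
      ring
    rw [Finset.prod_congr rfl h1, Finset.prod_mul_distrib, Finset.prod_mul_distrib,
      Finset.prod_const, Finset.card_range, T_prod, Finset.prod_range_reflect
        (fun n => (1 - T (↑(5*n+1)) : ℤ[T;T⁻¹])) N]
    have hsum : ∑ j ∈ range N, (5*(j:ℤ) + 4 - 5*N) = sN := by
      have : ∀ j ∈ range N, (5*(j:ℤ) + 4 - 5*N) = 5*(j:ℤ) + (4 - 5*(N:ℤ)) := by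
        intro j _; ring
      rw [Finset.sum_congr rfl this, Finset.sum_add_distrib, Finset.sum_const,
        Finset.card_range, ← Finset.mul_sum, sum_range_int, nsmul_eq_mul, hsN]
      ring
    rw [hsum]
    ring
  rw [hsplit] at base
  -- cancel the unit `(-1)^N * T sN`
  have hu : IsUnit ((-1:ℤ[T;T⁻¹])^N * T sN) :=
    ((isUnit_one.neg).pow N).mul (isUnit_T sN)
  refine hu.mul_left_cancel ?_
  rw [Finset.prod_mul_distrib, base, Finset.mul_sum]
  refine Finset.sum_congr rfl fun k hk => ?_
  simp only [Finset.mem_range] at hk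
  have hT : (T (↑((Ez ((k:ℤ) - N)).toNat)) : ℤ[T;T⁻¹]) = T (Ez ((k:ℤ) - N)) := by
    rw [Int.toNat_of_nonneg (Ez_nonneg _)]
  have hexp : sN + Ez ((k:ℤ) - N) = 5 * tri k + k * (4 - 5*N) := by
    have h1 := two_Ez ((k:ℤ) - N)
    have hck := tri_cast k
    have hcN := tri_cast N
    have h2g : 2*(sN + Ez ((k:ℤ) - N)) = 2*(5 * (tri k : ℤ) + k * (4 - 5*(N:ℤ))) := by
      linear_combination h1 - 5*hck + 5*hcN
    omega
  rw [hT]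
  symm
  calc ((-1:ℤ[T;T⁻¹])^N * T sN) * ((-1)^(N+k) * toLaurent (gb (2*N) k) * T (Ez ((k:ℤ) - N)))
      = ((-1)^(N+(N+k))) * toLaurent (gb (2*N) k) * (T sN * T (Ez ((k:ℤ) - N))) := by
        rw [pow_add]; ring
    _ = (-1)^k * toLaurent (gb (2*N) k) * T (5 * tri k + k * (4 - 5*N)) := by
        rw [← T_add, hexp, show N+(N+k) = 2*N+k from by ring, pow_add, pow_mul,
          neg_one_sq, one_pow, one_mul]

section PartFour
open PowerSeries Filter

local notation "XX" => (PowerSeries.X : PowerSeries ℤ)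

noncomputable def fP (n : ℕ) : PowerSeries ℤ :=
  (1 - XX ^ (5*n+5)) * (1 - XX ^ (5*n+4)) * (1 - XX ^ (5*n+1))

noncomputable def gP (k : ℤ) : PowerSeries ℤ :=
  (-1 : PowerSeries ℤ) ^ k.natAbs * XX ^ (k * (5 * k + 3) / 2).toNat

noncomputable def PO (a : ℕ) : PowerSeries ℤ := ∏ i ∈ Finset.range a, (1 - XX ^ (5*(i+1)))

lemma coeff_eq_of_sub_dvd {A B : PowerSeries ℤ} {D m : ℕ}
    (h : XX ^ D ∣ A - B) (hm : m < D) : PowerSeries.coeff (R := ℤ) m A = PowerSeries.coeff (R := ℤ) m B := by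
  have h0 := (PowerSeries.X_pow_dvd_iff.mp h) m hm
  rw [map_sub, sub_eq_zero] at h0
  exact h0

lemma dvd_mul_sub_one {A B : PowerSeries ℤ} {D : ℕ}
    (hA : XX ^ D ∣ A - 1) (hB : XX ^ D ∣ B - 1) : XX ^ D ∣ A * B - 1 := by
  have : A * B - 1 = A * (B - 1) + (A - 1) := by ring
  rw [this]
  exact dvd_add (hB.mul_left A) hA

lemma dvd_prod_sub_one {ι : Type*} {s : Finset ι} {F : ι → PowerSeries ℤ} {D : ℕ}
    (h : ∀ i ∈ s, XX ^ D ∣ F i - 1) : XX ^ D ∣ (∏ i ∈ s, F i) - 1 := by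
  induction s using Finset.cons_induction with
  | empty => simp
  | cons a s ha ih =>
    rw [Finset.prod_cons]
    exact dvd_mul_sub_one (h a (Finset.mem_cons_self a s))
      (ih fun i hi => h i (Finset.mem_cons_of_mem hi))

lemma dvd_one_sub_pow {D e : ℕ} (h : D ≤ e) : XX ^ D ∣ (1 - XX ^ e) - 1 := by
  rw [show (1 - XX ^ e) - 1 = -(XX ^ e) from by ring]
  exact (pow_dvd_pow _ h).neg_right

lemma fP_sub_one {m n : ℕ} (h : m + 1 ≤ 5*n+1) : XX ^ (m+1) ∣ fP n - 1 := by
  refine dvd_mul_sub_one (dvd_mul_sub_one ?_ ?_) ?_ <;>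
    exact dvd_one_sub_pow (by omega)

lemma isUnit_PO (a : ℕ) : IsUnit (PO a) := by
  rw [PowerSeries.isUnit_iff_constantCoeff, PO, map_prod]
  have : ∀ i ∈ Finset.range a, (PowerSeries.constantCoeff (R := ℤ)) (1 - XX ^ (5*(i+1))) = 1 := by
    intro i _
    rw [map_sub, map_one, map_pow, PowerSeries.constantCoeff_X, zero_pow (by omega)]
    ring
  rw [Finset.prod_congr rfl this, Finset.prod_const_one]
  exact isUnit_one

lemma coeff_gP (m : ℕ) (k : ℤ) :
    PowerSeries.coeff (R := ℤ) m (gP k) = (-1)^k.natAbs * (if m = (Ez k).toNat then 1 else 0) := by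
  have h1 : (-1 : PowerSeries ℤ) ^ k.natAbs = PowerSeries.C (R := ℤ) ((-1)^k.natAbs) := by
    rw [map_pow, map_neg, map_one]
  rw [gP, h1, PowerSeries.coeff_C_mul, PowerSeries.coeff_X_pow]
  rfl

/-- `PO` stabilizes modulo `X^(5r+5)`. -/
lemma PO_mod (r : ℕ) (a : ℕ) (ha : r ≤ a) :
    (Ideal.Quotient.mk (Ideal.span {XX ^ (5*r+5)})) (PO a)
      = (Ideal.Quotient.mk (Ideal.span {XX ^ (5*r+5)})) (PO r) := by
  set π := Ideal.Quotient.mk (Ideal.span {XX ^ (5*r+5)}) with hπ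
  have h := Finset.prod_range_add (fun i => (1 - XX ^ (5*(i+1)))) r (a - r)
  rw [show r + (a-r) = a from by omega] at h
  rw [PO, h, map_mul, ← PO]
  have h2 : π (∏ i ∈ Finset.range (a - r), (1 - XX ^ (5*(r+i+1)))) = 1 := by
    rw [map_prod]
    have : ∀ i ∈ Finset.range (a-r), π (1 - XX ^ (5*(r+i+1))) = 1 := by
      intro i _
      have hz : π (XX ^ (5*(r+i+1))) = 0 := by
        rw [Ideal.Quotient.eq_zero_iff_mem, Ideal.mem_span_singleton]
        exact pow_dvd_pow _ (by omega)
      rw [map_sub, map_one, hz, sub_zero]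
    rw [Finset.prod_congr rfl this, Finset.prod_const_one]
  rw [h2, mul_one]

lemma poch_coe (b : ℕ) : ((poch b : Polynomial ℤ) : PowerSeries ℤ) = PO b := by
  rw [← Polynomial.coeToPowerSeries.ringHom_apply, poch, PO, map_prod]
  refine Finset.prod_congr rfl fun i _ => ?_
  rw [map_sub, map_one, map_pow, Polynomial.coeToPowerSeries.ringHom_apply,
    Polynomial.coe_X]

/-- The key congruence: `PO N * gb (2N) j ≡ 1 mod X^(5r+5)`. -/
lemma gb_unit_mod {N j r : ℕ} (hj : j ≤ 2*N) (hr1 : r ≤ j) (hr2 : r ≤ 2*N - j)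
    (hr3 : r ≤ N) :
    XX ^ (5*r+5) ∣ PO N * ((gb (2*N) j : Polynomial ℤ) : PowerSeries ℤ) - 1 := by
  set π := Ideal.Quotient.mk (Ideal.span {XX ^ (5*r+5)}) with hπ
  set GB := ((gb (2*N) j : Polynomial ℤ) : PowerSeries ℤ) with hGB
  have hid : GB * PO j * PO (2*N - j) = PO (2*N) := by
    have := congrArg (fun p : Polynomial ℤ => (p : PowerSeries ℤ)) (gb_mul_poch hj)
    simpa [Polynomial.coe_mul, poch_coe] using this
  have hu : IsUnit (π (PO r)) := (isUnit_PO r).map π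
  have hmain : π (PO N * GB) = 1 := by
    refine hu.mul_right_cancel ?_
    have h1 : π (PO N * GB) * π (PO r) = π GB * π (PO r) * π (PO r) := by
      rw [map_mul, PO_mod r N hr3]
      ring
    have h2 : π GB * π (PO r) * π (PO r) = π (PO r) := by
      have := congrArg π hid
      rw [map_mul, map_mul, PO_mod r j hr1, PO_mod r (2*N-j) hr2,
        PO_mod r (2*N) (by omega)] at this
      exact this
    rw [h1, h2, one_mul]
  have : π (PO N * GB - 1) = 0 := by rw [map_sub, map_one, hmain, sub_self]
  rw [Ideal.Quotient.eq_zero_iff_mem, Ideal.mem_span_singleton] at this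
  exact this

/-- The key identity, in power series. -/
lemma key_identity_ps (N : ℕ) :
    (∏ n ∈ Finset.range N, ((1 - XX ^ (5*n+1)) * (1 - XX ^ (5*n+4))))
      = ∑ k ∈ Finset.range (2*N+1),
          (-1 : PowerSeries ℤ)^(N+k) * ((gb (2*N) k : Polynomial ℤ) : PowerSeries ℤ)
            * XX ^ (Ez ((k : ℤ) - N)).toNat := by
  have := congrArg Polynomial.coeToPowerSeries.ringHom (key_identity N)
  rw [map_prod, map_sum] at this
  simp only [map_mul, map_sub, map_one, map_pow, map_neg,
    Polynomial.coeToPowerSeries.ringHom_apply, Polynomial.coe_X] at this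
  exact this

lemma apply_eq_coeff (φ : PowerSeries ℤ) (d : Unit →₀ ℕ) :
    (φ : (Unit →₀ ℕ) → ℤ) d = PowerSeries.coeff (R := ℤ) (d ()) φ := by
  conv_lhs => rw [Finsupp.unique_single d]
  rfl

lemma tendsto_of_coeff_eventually {ι : Type*} (F : Finset ι → PowerSeries ℤ)
    (P : PowerSeries ℤ)
    (h : ∀ m : ℕ, ∀ᶠ s : Finset ι in Filter.atTop,
      PowerSeries.coeff (R := ℤ) m (F s) = PowerSeries.coeff (R := ℤ) m P) :
    Filter.Tendsto F Filter.atTop (nhds P) := by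
  refine (tendsto_pi_nhds (f := fun s => (F s : (Unit →₀ ℕ) → ℤ))
    (g := (P : (Unit →₀ ℕ) → ℤ))).mpr fun d => ?_
  refine Filter.Tendsto.congr' ?_ (tendsto_const_nhds (x := (P : (Unit →₀ ℕ) → ℤ) d))
  filter_upwards [h (d ())] with s hs
  exact (apply_eq_coeff P d).trans (hs.symm.trans (apply_eq_coeff (F s) d).symm)

noncomputable def Plim : PowerSeries ℤ :=
  PowerSeries.mk fun m => PowerSeries.coeff (R := ℤ) m (∏ n ∈ Finset.range (m+1), fP n)

noncomputable def Slim : PowerSeries ℤ :=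
  PowerSeries.mk fun m => PowerSeries.coeff (R := ℤ) m (∑ k ∈ Finset.Icc (-(m+1) : ℤ) (m+1), gP k)

lemma hasProd_fP : HasProd fP Plim := by
  refine tendsto_of_coeff_eventually _ _ fun m => ?_
  rw [Filter.eventually_atTop]
  refine ⟨Finset.range (m+1), fun s hs => ?_⟩
  rw [Plim, coeff_mk]
  rw [← Finset.prod_sdiff hs]
  have hdvd : XX ^ (m+1) ∣ (∏ n ∈ s \ Finset.range (m+1), fP n) - 1 := by
    refine dvd_prod_sub_one fun n hn => ?_
    have : m + 1 ≤ n := by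
      simp only [Finset.mem_sdiff, Finset.mem_range] at hn
      omega
    exact fP_sub_one (by omega)
  have : PowerSeries.coeff (R := ℤ) m ((∏ n ∈ s \ Finset.range (m+1), fP n) * ∏ n ∈ Finset.range (m+1), fP n)
      = PowerSeries.coeff (R := ℤ) m (∏ n ∈ Finset.range (m+1), fP n) := by
    refine coeff_eq_of_sub_dvd ?_ (Nat.lt_succ_self m)
    have : (∏ n ∈ s \ Finset.range (m+1), fP n) * (∏ n ∈ Finset.range (m+1), fP n)
        - ∏ n ∈ Finset.range (m+1), fP n
        = ((∏ n ∈ s \ Finset.range (m+1), fP n) - 1) * ∏ n ∈ Finset.range (m+1), fP n := by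
      ring
    rw [this]
    exact hdvd.mul_right _
  exact this

lemma coeff_gP_eq_zero {m : ℕ} {k : ℤ} (h : (m:ℤ) < k.natAbs) : PowerSeries.coeff (R := ℤ) m (gP k) = 0 := by
  rw [coeff_gP]
  have hEz : (k.natAbs : ℤ) ≤ Ez k := Ez_ge k
  have : m ≠ (Ez k).toNat := by omega
  rw [if_neg this, mul_zero]

lemma hasSum_gP : HasSum gP Slim := by
  refine tendsto_of_coeff_eventually _ _ fun m => ?_
  rw [Filter.eventually_atTop]
  refine ⟨Finset.Icc (-(m+1) : ℤ) (m+1), fun t ht => ?_⟩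
  rw [Slim, coeff_mk, map_sum, map_sum]
  refine (Finset.sum_subset ht fun k hk hk2 => ?_).symm
  refine coeff_gP_eq_zero ?_
  simp only [Finset.mem_Icc] at hk2
  omega

lemma neg_one_pow_par {a b : ℕ} (h : a % 2 = b % 2) : ((-1 : ℤ))^a = (-1)^b := by
  rcases Nat.even_or_odd a with he | ho
  · have ha := Nat.even_iff.mp he
    rw [he.neg_one_pow, (Nat.even_iff.mpr (by omega)).neg_one_pow]
  · have ha := Nat.odd_iff.mp ho
    rw [ho.neg_one_pow, (Nat.odd_iff.mpr (by omega)).neg_one_pow]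

lemma term_eq (m j : ℕ) (hj : j < 2*(m+1)+1) :
    PowerSeries.coeff (R := ℤ) m (PO (m+1) * ((-1 : PowerSeries ℤ)^((m+1)+j)
        * ((gb (2*(m+1)) j : Polynomial ℤ) : PowerSeries ℤ)
        * XX ^ (Ez ((j:ℤ) - (↑(m+1) : ℤ))).toNat))
      = PowerSeries.coeff (R := ℤ) m (gP ((j:ℤ) - (↑(m+1) : ℤ))) := by
  set N := m + 1 with hN
  set κ : ℤ := (j:ℤ) - N with hκ
  set t : ℕ := κ.natAbs with ht
  set En : ℕ := (Ez κ).toNat with hEn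
  set GB := ((gb (2*N) j : Polynomial ℤ) : PowerSeries ℤ) with hGB
  have hsign : ((-1 : ℤ))^(N+j) = (-1)^t := neg_one_pow_par (by omega)
  have hL : PO N * ((-1 : PowerSeries ℤ)^(N+j) * GB * XX^En)
      = PowerSeries.C (R := ℤ) ((-1)^(N+j)) * ((PO N * GB) * XX^En) := by
    rw [show ((-1 : PowerSeries ℤ))^(N+j) = PowerSeries.C (R := ℤ) ((-1)^(N+j)) from by
      rw [map_pow, map_neg, map_one]]
    ring
  have hgp : gP κ = PowerSeries.C (R := ℤ) ((-1)^t) * XX ^ En := by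
    rw [gP, show ((-1 : PowerSeries ℤ))^κ.natAbs = PowerSeries.C (R := ℤ) ((-1)^κ.natAbs) from by
      rw [map_pow, map_neg, map_one]]
    rfl
  rw [hL, hgp, PowerSeries.coeff_C_mul, PowerSeries.coeff_C_mul, hsign]
  congr 1
  rw [PowerSeries.coeff_mul_X_pow', PowerSeries.coeff_X_pow]
  -- arithmetic preliminaries
  have h2E : 2*(En:ℤ) ≥ 5*((t:ℤ)*t) - 3*t := by
    have h1 := two_Ez κ
    have h2 : (En:ℤ) = Ez κ := Int.toNat_of_nonneg (Ez_nonneg κ)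
    have h3 : κ*κ = (t:ℤ)*(t:ℤ) := by
      have := Int.natAbs_mul_self (a := κ)
      push_cast [ht] at this ⊢
      linarith [this]
    have h4 : -(t:ℤ) ≤ κ := by omega
    nlinarith [h1, h2, h3, h4]
  have hlin : 5*t ≤ 4*m + 9 + En := by
    have h5 : 5*(t:ℤ) ≤ 4*(m:ℤ) + 9 + En := by nlinarith [h2E, sq_nonneg ((t:ℤ) - 2)]
    exact_mod_cast h5
  have htN : t ≤ N := by omega
  by_cases hEm : En ≤ m
  · rw [if_pos hEm]
    have hdvd := gb_unit_mod (N := N) (j := j) (r := N - t)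
      (by omega) (by omega) (by omega) (by omega)
    have hlt : m - En < 5*(N-t)+5 := by omega
    have hco' : PowerSeries.coeff (R := ℤ) (m - En) (PO N * GB) = PowerSeries.coeff (R := ℤ) (m - En) 1 :=
      coeff_eq_of_sub_dvd hdvd hlt
    rw [hco', PowerSeries.coeff_one]
    exact if_congr (by omega) rfl rfl
  · rw [if_neg hEm, if_neg (by omega)]

lemma Plim_eq_Slim : Plim = Slim := by
  apply PowerSeries.ext
  intro m
  rw [Plim, Slim, coeff_mk, coeff_mk]
  set N := m + 1 with hN
  have hsplit : ∏ n ∈ Finset.range N, fP n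
      = PO N * ∏ n ∈ Finset.range N, ((1 - XX^(5*n+1)) * (1 - XX^(5*n+4))) := by
    rw [PO, ← Finset.prod_mul_distrib]
    refine Finset.prod_congr rfl fun n _ => ?_
    rw [fP, show 5*(n+1) = 5*n+5 from by ring]
    ring
  rw [hsplit, key_identity_ps, Finset.mul_sum, map_sum, map_sum]
  refine Finset.sum_bij' (i := fun (j : ℕ) (_ : j ∈ Finset.range (2*N+1)) => (j:ℤ) - N)
    (j := fun (k : ℤ) (_ : k ∈ Finset.Icc (-(m+1) : ℤ) (m+1)) => (k + N).toNat)
    ?_ ?_ ?_ ?_ ?_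
  · intro a ha
    simp only [Finset.mem_range] at ha
    simp only [Finset.mem_Icc]
    omega
  · intro a ha
    simp only [Finset.mem_Icc] at ha
    simp only [Finset.mem_range]
    omega
  · intro a ha
    simp only [Finset.mem_range] at ha
    try dsimp only
    omega
  · intro a ha
    simp only [Finset.mem_Icc] at ha
    try dsimp only
    omega
  · intro a ha
    simp only [Finset.mem_range] at ha
    exact term_eq m a (by omega)


end PartFour
end Aux

/-- Euler-type product = bilateral theta sum: the specialization `u = q⁴`, `v = q`
of the Jacobi triple product identity. -/
theorem jacobi_specialization_one :
    (∏' n : ℕ, ((1 - (X : ℤ⟦X⟧) ^ (5 * n + 5)) * (1 - X ^ (5 * n + 4)) * (1 - X ^ (5 * n + 1))))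
      = ∑' k : ℤ, ((-1 : ℤ⟦X⟧) ^ k.natAbs * X ^ (k * (5 * k + 3) / 2).toNat) := by
  haveI : T2Space (PowerSeries ℤ) := inferInstanceAs (T2Space ((Unit →₀ ℕ) → ℤ))
  have h1 : HasProd fP Plim := hasProd_fP
  have h2 : HasSum gP Slim := hasSum_gP
  exact h1.tprod_eq.trans (Plim_eq_Slim.trans h2.tsum_eq.symm)
end

section
/- As an identity of formal power series in q with integer coefficients, the product ∏_{n≥1} (1 - q^{5n})(1 - q^{5n-2})(1 - q^{5n-3}) equals the sum ∑_{k∈ℤ} (-1)^k q^{k(5k+1)/2}. -/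
open PowerSeries Filter Finset

noncomputable instance : T2Space (PowerSeries ℤ) :=
  inferInstanceAs (T2Space ((Unit →₀ ℕ) → ℤ))

namespace JTPaux

variable {R : Type*} [CommRing R]

/-- Gaussian binomial coefficients in base `Q`, via the Pascal recurrence. -/
def gb (Q : R) : ℕ → ℕ → R
  | 0, 0 => 1
  | 0, _+1 => 0
  | n+1, 0 => gb Q n 0
  | n+1, j+1 => gb Q n (j+1) + Q^(n-j) * gb Q n j

@[simp] lemma gb_zero_right (Q : R) : ∀ n, gb Q n 0 = 1
  | 0 => rfl
  | n+1 => gb_zero_right Q n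

lemma gb_eq_zero (Q : R) : ∀ n j, n < j → gb Q n j = 0
  | 0, j+1, _ => rfl
  | n+1, j+1, h => by
      rw [gb, gb_eq_zero Q n (j+1) (by omega), gb_eq_zero Q n j (by omega)]
      ring

@[simp] lemma gb_diag (Q : R) : ∀ n, gb Q n n = 1
  | 0 => rfl
  | n+1 => by rw [gb, gb_eq_zero Q n (n+1) (by omega), gb_diag Q n, Nat.sub_self, pow_zero]; ring

/-- The `q`-binomial theorem. -/
lemma qbt (Q x y : R) : ∀ n, ∏ i ∈ range n, (y - x * Q^i)
    = ∑ j ∈ range (n+1), (-1)^j * gb Q n j * Q^(j.choose 2) * x^j * y^(n-j)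
  | 0 => by simp [gb]
  | n+1 => by
      rw [prod_range_succ, qbt Q x y n]
      have key : ∀ j ∈ range (n+2),
          (-1:R)^j * gb Q (n+1) j * Q^(j.choose 2) * x^j * y^(n+1-j)
          = (fun j => (-1:R)^j * gb Q n j * Q^(j.choose 2) * x^j * y^(n+1-j)) j
            + (fun j => if j = 0 then 0 else
                (-1:R)^j * Q^(n-(j-1)) * gb Q n (j-1) * Q^(j.choose 2) * x^j * y^(n+1-j)) j := by
        rintro (_|j) hj
        · simp [gb]
        · simp only [if_neg (Nat.succ_ne_zero j)]
          rw [gb, Nat.add_sub_cancel]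
          ring
      rw [Finset.sum_congr rfl key, Finset.sum_add_distrib]
      have h1 : ∑ j ∈ range (n+2), (-1:R)^j * gb Q n j * Q^(j.choose 2) * x^j * y^(n+1-j)
          = y * ∑ j ∈ range (n+1), (-1:R)^j * gb Q n j * Q^(j.choose 2) * x^j * y^(n-j) := by
        rw [Finset.sum_range_succ, gb_eq_zero Q n (n+1) (by omega), Finset.mul_sum]
        have : ∀ j ∈ range (n+1),
            (-1:R)^j * gb Q n j * Q^(j.choose 2) * x^j * y^(n+1-j)
            = y * ((-1:R)^j * gb Q n j * Q^(j.choose 2) * x^j * y^(n-j)) := by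
          intro j hj
          rw [mem_range] at hj
          have : n + 1 - j = (n - j) + 1 := by omega
          rw [this, pow_succ]
          ring
        rw [Finset.sum_congr rfl this]
        ring
      have h2 : ∑ j ∈ range (n+2), (if j = 0 then (0:R) else
            (-1:R)^j * Q^(n-(j-1)) * gb Q n (j-1) * Q^(j.choose 2) * x^j * y^(n+1-j))
          = -(x * Q^n) * ∑ j ∈ range (n+1), (-1:R)^j * gb Q n j * Q^(j.choose 2) * x^j * y^(n-j) := by
        rw [Finset.sum_range_succ' (fun j => if j = 0 then (0:R) else ((-1:R)^j * Q^(n-(j-1)) * gb Q n (j-1) * Q^(j.choose 2) * x^j * y^(n+1-j))) (n+1)]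
        simp only [if_neg (Nat.succ_ne_zero _), Nat.add_sub_cancel, reduceIte, if_true, add_zero]
        rw [Finset.mul_sum]
        apply Finset.sum_congr rfl
        intro j hj
        rw [mem_range] at hj
        have hch : (j+1).choose 2 = j.choose 2 + j := by
          rw [Nat.choose_succ_succ, Nat.choose_one_right, Nat.add_comm]
        have hq : Q^(n-j) * Q^((j+1).choose 2) = Q^n * Q^(j.choose 2) := by
          rw [← pow_add, ← pow_add, hch]
          congr 1
          omega
        have hs : n + 1 - (j+1) = n - j := by omega
        have hq2 : Q^(n-j) * Q^(j.choose 2 + j) = Q^n * Q^(j.choose 2) := by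
          rw [← pow_add, ← pow_add]; congr 1; omega
        rw [hs, hch, pow_succ (-1:R), pow_succ x]
        linear_combination ((-1:R)^j * -1 * gb Q n j * x^j * x * y^(n-j)) * hq2
      rw [h1, h2]
      ring

/-- `(Q;Q)_m`, the finite `q`-Pochhammer product. -/
def DQ (Q : R) (m : ℕ) : R := ∏ i ∈ range m, (1 - Q^(i+1))

lemma DQ_succ (Q : R) (m : ℕ) : DQ Q (m+1) = DQ Q m * (1 - Q^(m+1)) :=
  prod_range_succ _ _

lemma DQ_mul_gb (Q : R) : ∀ n j, j ≤ n → DQ Q j * DQ Q (n-j) * gb Q n j = DQ Q n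
  | 0, 0, _ => by simp [DQ, gb]
  | n+1, 0, _ => by simp [DQ]
  | n+1, j+1, h => by
    rcases eq_or_lt_of_le h with he | hlt
    · have : j = n := by omega
      subst this
      rw [Nat.sub_self, gb_diag]
      simp [DQ]
    · have hj : j + 1 ≤ n := by omega
      have e1 : n + 1 - (j+1) = (n - (j+1)) + 1 := by omega
      have e2 : n - (j+1) + 1 = n - j := by omega
      have hs1 : DQ Q (n+1-(j+1)) = DQ Q (n-(j+1)) * (1 - Q^(n-j)) := by
        rw [e1, DQ_succ, e2]
      have hs2 : DQ Q (j+1) = DQ Q j * (1 - Q^(j+1)) := DQ_succ Q j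
      have hQ : Q^(n-j) * Q^(j+1) = Q^(n+1) := by rw [← pow_add]; congr 1; omega
      have h1 := DQ_mul_gb Q n (j+1) hj
      have h2 := DQ_mul_gb Q n j (by omega)
      have hs3 : DQ Q (n - (j+1)) * (1 - Q^(n-j)) = DQ Q (n-j) := by
        rw [← e2, DQ_succ, e2]
      rw [hs2] at h1
      rw [← hs3] at h2
      rw [gb, hs1, hs2, DQ_succ]
      linear_combination (1 - Q^(n-j))*h1 + Q^(n-j)*(1-Q^(j+1))*h2 - DQ Q n * hQ

lemma mul_sub_one_dvd {d u v : R} (hu : d ∣ u - 1) (hv : d ∣ v - 1) :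
    d ∣ u * v - 1 := by
  have : u * v - 1 = u * (v - 1) + (u - 1) := by ring
  rw [this]
  exact dvd_add (Dvd.dvd.mul_left hv u) hu

lemma prod_sub_one_dvd {ι : Type*} {d : R} {f : ι → R} {s : Finset ι}
    (h : ∀ i ∈ s, d ∣ f i - 1) : d ∣ (∏ i ∈ s, f i) - 1 := by
  classical
  induction s using Finset.induction_on with
  | empty => simp
  | @insert a s' hx ih =>
    rw [Finset.prod_insert hx]
    exact mul_sub_one_dvd (h a (mem_insert_self a s'))
      (ih fun i hi => h i (mem_insert_of_mem hi))

lemma DQ_sub_dvd (Q : R) {r s : ℕ} (h : r ≤ s) : Q^(r+1) ∣ DQ Q s - DQ Q r := by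
  obtain ⟨t, rfl⟩ : ∃ t, s = r + t := ⟨s - r, by omega⟩
  rw [DQ, prod_range_add]
  have : (∏ i ∈ range r, (1 - Q^(i+1))) * (∏ i ∈ range t, (1 - Q^(r+i+1))) - DQ Q r
      = DQ Q r * ((∏ i ∈ range t, (1 - Q^(r+i+1))) - 1) := by rw [DQ]; ring
  rw [this]
  refine Dvd.dvd.mul_left (prod_sub_one_dvd fun i _ => ?_) _
  have : (1:R) - Q^(r+i+1) - 1 = -(Q^(r+1) * Q^i) := by rw [← pow_add]; ring_nf
  rw [this]
  exact (dvd_mul_right _ _).neg_right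


lemma c2 : ∀ n : ℕ, 2 * ((n.choose 2 : ℤ)) = n * (n - 1)
  | 0 => by simp
  | n+1 => by
      rw [Nat.choose_succ_succ, Nat.choose_one_right]
      push_cast
      linear_combination c2 n

/-- the exponent `k(5k+1)/2` as a natural number. -/
def e (k : ℤ) : ℕ := (k * (5*k+1) / 2).toNat

lemma e_two (k : ℤ) : 2 * (e k : ℤ) = k * (5*k+1) := by
  have h2 : (2:ℤ) ∣ k*(5*k+1) := by
    rcases Int.even_or_odd k with ⟨t,ht⟩|⟨t,ht⟩
    · exact ⟨t*(5*(t+t)+1), by rw [ht]; ring⟩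
    · exact ⟨(2*t+1)*(5*t+3), by rw [ht]; ring⟩
  have hnn : 0 ≤ k*(5*k+1) := by
    rcases le_or_gt 0 k with h|h
    · exact mul_nonneg h (by omega)
    · exact le_of_lt (mul_pos_of_neg_of_neg h (by omega))
  rw [e, Int.toNat_of_nonneg (Int.ediv_nonneg hnn (by norm_num)),
    Int.mul_ediv_cancel' h2]

/-- the exponent identity for the terms of the q-binomial sum -/
lemma exp_eq (m j : ℕ) (hm : 1 ≤ m) (hj : j ≤ 2*m) :
    5 * j.choose 2 + (5*m-3)*(2*m-j)
      = (5 * m.choose 2 + (5*m-3)*m) + e ((j:ℤ) - m) := by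
  have hcj := c2 j
  have hcm := c2 m
  have he := e_two ((j:ℤ) - m)
  zify [show 3 ≤ 5*m from by omega, hj]
  have key : 2 * (5 * (j.choose 2 : ℤ) + (5*(m:ℤ)-3)*(2*m-j))
      = 2 * ((5 * (m.choose 2:ℤ) + (5*(m:ℤ)-3)*m) + (e ((j:ℤ) - m) : ℤ)) := by
    linear_combination 5*hcj - 5*hcm - he
  omega

noncomputable def Pm (m : ℕ) : ℤ⟦X⟧ := ∏ j ∈ range m, ((1 - (X:ℤ⟦X⟧)^(5*j+2)) * (1 - X^(5*j+3)))

/-- The finite Jacobi triple product identity (specialized). -/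
lemma star (m : ℕ) (hm : 1 ≤ m) :
    (X:ℤ⟦X⟧)^(5 * m.choose 2 + (5*m-3)*m) * Pm m
      = X^(5 * m.choose 2 + (5*m-3)*m) *
        ∑ j ∈ range (2*m+1), (-1:ℤ⟦X⟧)^(j+m) * gb ((X:ℤ⟦X⟧)^5) (2*m) j * X^(e ((j:ℤ) - m)) := by
  set E := 5 * m.choose 2 + (5*m-3)*m with hE
  have hqbt := qbt ((X:ℤ⟦X⟧)^5) 1 (X^(5*m-3)) (2*m)
  -- Left side of hqbt
  have hL : ∏ i ∈ range (2*m), ((X:ℤ⟦X⟧)^(5*m-3) - 1 * (X^5)^i)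
      = (-1)^m * (X^E * Pm m) := by
    rw [show 2*m = m + m from by ring, prod_range_add]
    have hA : ∀ i ∈ range m, (X:ℤ⟦X⟧)^(5*m-3) - 1 * (X^5)^i
        = (-1) * (X^(5*i) * (1 - X^(5*(m-1-i)+2))) := by
      intro i hi
      rw [mem_range] at hi
      have h5 : 5*i + (5*(m-1-i)+2) = 5*m-3 := by omega
      rw [one_mul, ← pow_mul, mul_sub, mul_one, ← pow_add, h5]
      ring
    have hB : ∀ i ∈ range m, (X:ℤ⟦X⟧)^(5*m-3) - 1 * (X^5)^(m+i)
        = X^(5*m-3) * (1 - X^(5*i+3)) := by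
      intro i hi
      have h5 : (5*m-3) + (5*i+3) = 5*(m+i) := by omega
      rw [one_mul, ← pow_mul, mul_sub, mul_one, ← pow_add, h5]
    rw [prod_congr rfl hA, prod_congr rfl hB]
    simp only [prod_mul_distrib, prod_const, card_range, prod_pow_eq_pow_sum]
    have hsum : ∑ i ∈ range m, 5*i = 5 * m.choose 2 := by
      have h1 := Finset.sum_range_id_mul_two m
      have h2 := Nat.choose_two_right m
      have h3 : ∑ i ∈ range m, 5*i = 5 * ∑ i ∈ range m, i := by
        rw [Finset.mul_sum]
      omega
    rw [hsum, prod_range_reflect (fun j => 1 - (X:ℤ⟦X⟧)^(5*j+2)) m]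
    rw [Pm, prod_mul_distrib, hE]
    rw [pow_add]
    ring
  -- Right side of hqbt
  have hR : ∀ j ∈ range (2*m+1),
      (-1:ℤ⟦X⟧)^j * gb ((X:ℤ⟦X⟧)^5) (2*m) j * (X^5)^(j.choose 2) * 1^j * (X^(5*m-3))^(2*m-j)
      = (-1)^j * gb ((X:ℤ⟦X⟧)^5) (2*m) j * (X^E * X^(e ((j:ℤ) - m))) := by
    intro j hj
    rw [mem_range] at hj
    have hx : ((X:ℤ⟦X⟧)^5)^(j.choose 2) * (X^(5*m-3))^(2*m-j)
        = X^E * X^(e ((j:ℤ) - m)) := by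
      rw [← pow_mul, ← pow_mul, ← pow_add, ← pow_add]
      congr 1
      rw [hE]
      exact exp_eq m j hm (by omega)
    rw [one_pow, mul_one, mul_assoc, hx]
  rw [prod_congr rfl (fun i _ => rfl), Finset.sum_congr rfl hR] at hqbt
  -- combine
  have hsq : ((-1:ℤ⟦X⟧))^m * (-1)^m = 1 := by
    rw [← pow_add]
    exact Even.neg_one_pow ⟨m, by ring⟩
  calc (X:ℤ⟦X⟧)^E * Pm m
      = (-1)^m * ((-1)^m * (X^E * Pm m)) := by rw [← mul_assoc, hsq, one_mul]
    _ = (-1)^m * ∑ j ∈ range (2*m+1),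
          (-1:ℤ⟦X⟧)^j * gb ((X:ℤ⟦X⟧)^5) (2*m) j * (X^E * X^(e ((j:ℤ) - m))) := by
        rw [← hqbt, hL]
    _ = X^E * ∑ j ∈ range (2*m+1),
          (-1:ℤ⟦X⟧)^(j+m) * gb ((X:ℤ⟦X⟧)^5) (2*m) j * X^(e ((j:ℤ) - m)) := by
        rw [Finset.mul_sum, Finset.mul_sum]
        refine Finset.sum_congr rfl fun j _ => ?_
        rw [pow_add]
        ring


noncomputable def D (m : ℕ) : ℤ⟦X⟧ := DQ ((X:ℤ⟦X⟧)^5) m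

lemma D_unit (m : ℕ) : IsUnit (D m) := by
  rw [PowerSeries.isUnit_iff_constantCoeff]
  rw [D, DQ, map_prod]
  have : ∀ i ∈ range m, constantCoeff (1 - ((X:ℤ⟦X⟧)^5)^(i+1)) = 1 := by
    intro i _
    rw [map_sub, map_one, map_pow, map_pow, constantCoeff_X]
    simp
  rw [prod_congr rfl this, prod_const_one]
  exact isUnit_one

lemma D_sub_dvd {r s : ℕ} (h : r ≤ s) : (X:ℤ⟦X⟧)^(5*r+5) ∣ D s - D r := by
  have := DQ_sub_dvd ((X:ℤ⟦X⟧)^5) h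
  rwa [← pow_mul, show 5*(r+1) = 5*r+5 from by ring] at this

lemma key_dvd (m a c : ℕ) (hac : a + c = 2*m) :
    (X:ℤ⟦X⟧)^(5*(min a c)+5) ∣ D m * gb ((X:ℤ⟦X⟧)^5) (2*m) a - 1 := by
  set μ := min a c with hμ
  have hgb := DQ_mul_gb ((X:ℤ⟦X⟧)^5) (2*m) a (by omega)
  rw [show 2*m - a = c from by omega] at hgb
  have h1 := D_sub_dvd (show μ ≤ m from by omega)
  have h2 := D_sub_dvd (show μ ≤ 2*m from by omega)
  have h3 := D_sub_dvd (show μ ≤ a from by omega)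
  have h4 := D_sub_dvd (show μ ≤ c from by omega)
  have hprod : (X:ℤ⟦X⟧)^(5*μ+5) ∣ D m * D (2*m) - D a * D c := by
    have : D m * D (2*m) - D a * D c
        = (D m - D μ) * D (2*m) + D μ * (D (2*m) - D μ)
          - (D a - D μ) * D c - D μ * (D c - D μ) := by ring
    rw [this]
    exact dvd_sub (dvd_sub (dvd_add (h1.mul_right _) (h2.mul_left _))
      (h3.mul_right _)) (h4.mul_left _)
  have hu : IsUnit (D a * D c) := (D_unit a).mul (D_unit c)
  rw [← hu.dvd_mul_left]
  have : D a * D c * (D m * gb ((X:ℤ⟦X⟧)^5) (2*m) a - 1)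
      = D m * (D a * D c * gb ((X:ℤ⟦X⟧)^5) (2*m) a) - D a * D c := by ring
  rw [this, show D a * D c * gb ((X:ℤ⟦X⟧)^5) (2*m) a
      = DQ ((X:ℤ⟦X⟧)^5) a * DQ ((X:ℤ⟦X⟧)^5) c * gb ((X:ℤ⟦X⟧)^5) (2*m) a from rfl, hgb]
  exact hprod

lemma coeff_eq_of_dvd {A B : ℤ⟦X⟧} {d : ℕ} (h : (X:ℤ⟦X⟧)^(d+1) ∣ A - B) :
    coeff d A = coeff d B := by
  have := (PowerSeries.X_pow_dvd_iff.mp h) d (lt_add_one d)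
  rw [map_sub, sub_eq_zero] at this
  exact this

lemma sign_eq (j m : ℕ) : ((-1:ℤ⟦X⟧))^(j+m) = (-1)^(((j:ℤ) - m).natAbs) := by
  rcases Nat.even_or_odd (j+m) with h|h
  · rw [Even.neg_one_pow h, Even.neg_one_pow ?_]
    rw [Nat.even_iff] at h ⊢
    omega
  · rw [Odd.neg_one_pow h, Odd.neg_one_pow ?_]
    rw [Nat.odd_iff] at h ⊢
    omega

noncomputable def g (k : ℤ) : ℤ⟦X⟧ := (-1:ℤ⟦X⟧)^k.natAbs * X^(e k)

noncomputable def T (m : ℕ) : ℤ⟦X⟧ :=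
  ∏ n ∈ range m, ((1 - (X:ℤ⟦X⟧)^(5*n+5)) * (1 - X^(5*n+3)) * (1 - X^(5*n+2)))

lemma T_eq (m : ℕ) : T m = D m * Pm m := by
  rw [T, D, DQ, Pm]
  have : ∀ i ∈ range m, (1 - ((X:ℤ⟦X⟧)^5)^(i+1)) = 1 - X^(5*i+5) := by
    intro i _
    rw [← pow_mul, show 5*(i+1) = 5*i+5 from by ring]
  rw [prod_congr rfl this]
  simp only [prod_mul_distrib]
  ring

lemma ineq (d j : ℕ) (hj : j ≤ 2*(d+2)) :
    d + 1 ≤ 5 * (min j (2*(d+2) - j)) + 5 + e ((j:ℤ) - (d+2)) := by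
  have he := e_two ((j:ℤ) - (d+2))
  set n : ℕ := ((j:ℤ) - (d+2)).natAbs with hn
  have hsq : ((j:ℤ) - (d+2))*(5*((j:ℤ)-(d+2))+1) ≥ 5*(n:ℤ)^2 - n := by
    rcases Int.natAbs_eq ((j:ℤ) - (d+2)) with h|h
    · rw [← hn] at h; rw [h]; nlinarith [Nat.cast_nonneg (α := ℤ) n]
    · rw [← hn] at h; rw [h]; nlinarith [Nat.cast_nonneg (α := ℤ) n]
  have hmin : ((min j (2*(d+2) - j) : ℕ) : ℤ) = ((d:ℤ)+2) - n := by omega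
  have hgoal : (d:ℤ) + 1 ≤ 5 * ((min j (2*(d+2) - j) : ℕ):ℤ) + 5 + (e ((j:ℤ) - (d+2)) : ℤ) := by
    rw [hmin]
    nlinarith [sq_nonneg ((n:ℤ) - 2), Nat.cast_nonneg (α := ℤ) n]
  exact_mod_cast hgoal

lemma coeff_T (d : ℕ) :
    coeff d (T (d+2)) = ∑ j ∈ range (2*(d+2)+1), coeff d (g ((j:ℤ) - (d+2))) := by
  set m := d + 2 with hm
  have hPm : Pm m = ∑ j ∈ range (2*m+1),
      (-1:ℤ⟦X⟧)^(j+m) * gb ((X:ℤ⟦X⟧)^5) (2*m) j * X^(e ((j:ℤ)-m)) :=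
    mul_left_cancel₀ (pow_ne_zero _ PowerSeries.X_ne_zero) (star m (by omega))
  rw [T_eq, hPm, Finset.mul_sum, map_sum]
  refine Finset.sum_congr rfl fun j hj => ?_
  rw [mem_range] at hj
  apply coeff_eq_of_dvd
  rw [show (j:ℤ) - ((d:ℤ)+2) = (j:ℤ) - (m:ℤ) from by rw [hm]; push_cast; ring]
  rw [g, ← sign_eq j m]
  have hre : D m * ((-1:ℤ⟦X⟧)^(j+m) * gb ((X:ℤ⟦X⟧)^5) (2*m) j * X^(e ((j:ℤ)-m)))
        - (-1:ℤ⟦X⟧)^(j+m) * X^(e ((j:ℤ)-m))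
      = (-1)^(j+m) * ((D m * gb ((X:ℤ⟦X⟧)^5) (2*m) j - 1) * X^(e ((j:ℤ)-m))) := by ring
  rw [hre]
  refine Dvd.dvd.mul_left ?_ _
  have hkey := key_dvd m j (2*m - j) (by omega)
  calc (X:ℤ⟦X⟧)^(d+1)
      ∣ (X:ℤ⟦X⟧)^(5*(min j (2*m-j))+5 + e ((j:ℤ)-m)) := pow_dvd_pow X (ineq d j (by omega))
    _ = (X:ℤ⟦X⟧)^(5*(min j (2*m-j))+5) * X^(e ((j:ℤ)-m)) := pow_add _ _ _
    _ ∣ (D m * gb ((X:ℤ⟦X⟧)^5) (2*m) j - 1) * X^(e ((j:ℤ)-m)) :=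
        mul_dvd_mul_right hkey _


lemma coeff_sign_mul_pow (s dd ee : ℕ) :
    coeff dd ((-1:ℤ⟦X⟧)^s * X^ee) = (-1:ℤ)^s * (if dd = ee then 1 else 0) := by
  rcases Nat.even_or_odd s with h|h
  · rw [h.neg_one_pow, h.neg_one_pow, one_mul, one_mul, coeff_X_pow]
  · rw [h.neg_one_pow, h.neg_one_pow, neg_one_mul, neg_one_mul, map_neg, coeff_X_pow]

lemma coeff_g_eq_zero {d : ℕ} {k : ℤ} (h : (d:ℤ) + 2 < |k|) : coeff d (g k) = 0 := by
  have he := e_two k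
  have hgt : (d:ℤ) < (e k : ℤ) := by
    nlinarith [sq_abs k, abs_nonneg k, neg_abs_le k]
  rw [g, coeff_sign_mul_pow, if_neg (by exact_mod_cast hgt.ne), mul_zero]

lemma tendsto_of_coeff {ι : Type*} (F : Finset ι → ℤ⟦X⟧) (Lv : ℤ⟦X⟧)
    (h : ∀ d : ℕ, ∃ s₀ : Finset ι, ∀ s ⊇ s₀, coeff d (F s) = coeff d Lv) :
    Filter.Tendsto F Filter.atTop (nhds Lv) := by
  refine tendsto_pi_nhds.mpr fun i => ?_
  have hGi : ∀ G : ℤ⟦X⟧, G i = (coeff (i default)) G := by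
    intro G
    have h1 : G i = G (Finsupp.single default (i default)) := by
      conv_lhs => rw [Finsupp.unique_single i]
    rw [h1]
    exact (MvPowerSeries.coeff_apply G (Finsupp.single default (i default))).symm
  obtain ⟨s₀, hs₀⟩ := h (i default)
  rw [nhds_discrete, Filter.tendsto_pure]
  filter_upwards [Filter.eventually_ge_atTop s₀] with s hs
  rw [hGi (F s), hGi Lv, hs₀ s hs]

noncomputable def Lser : ℤ⟦X⟧ :=
  PowerSeries.mk fun d => ∑ j ∈ range (2*(d+2)+1), coeff d (g ((j:ℤ) - (d+2)))

lemma hasProd_jtp : HasProd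
    (fun n : ℕ => ((1 - (X:ℤ⟦X⟧)^(5*n+5)) * (1 - X^(5*n+3)) * (1 - X^(5*n+2)))) Lser := by
  apply tendsto_of_coeff
  intro d
  refine ⟨range (d+2), fun s hs => ?_⟩
  have hsplit : ∏ n ∈ s, ((1 - (X:ℤ⟦X⟧)^(5*n+5)) * (1 - X^(5*n+3)) * (1 - X^(5*n+2)))
      = T (d+2) * ∏ n ∈ s \ range (d+2),
          ((1 - (X:ℤ⟦X⟧)^(5*n+5)) * (1 - X^(5*n+3)) * (1 - X^(5*n+2))) := by
    rw [T, ← Finset.prod_sdiff hs]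
    ring
  have hw : (X:ℤ⟦X⟧)^(d+1) ∣ (∏ n ∈ s \ range (d+2),
      ((1 - (X:ℤ⟦X⟧)^(5*n+5)) * (1 - X^(5*n+3)) * (1 - X^(5*n+2)))) - 1 := by
    refine prod_sub_one_dvd fun n hn => ?_
    have hd : d + 2 ≤ n := by
      rcases Finset.mem_sdiff.mp hn with ⟨_, hn2⟩
      rw [mem_range] at hn2
      omega
    have hA : (X:ℤ⟦X⟧)^(d+1) ∣ (1 - X^(5*n+5)) - 1 := by
      rw [show (1:ℤ⟦X⟧) - X^(5*n+5) - 1 = -(X^(5*n+5)) from by ring]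
      exact (pow_dvd_pow X (by omega)).neg_right
    have hB : (X:ℤ⟦X⟧)^(d+1) ∣ (1 - X^(5*n+3)) - 1 := by
      rw [show (1:ℤ⟦X⟧) - X^(5*n+3) - 1 = -(X^(5*n+3)) from by ring]
      exact (pow_dvd_pow X (by omega)).neg_right
    have hC : (X:ℤ⟦X⟧)^(d+1) ∣ (1 - X^(5*n+2)) - 1 := by
      rw [show (1:ℤ⟦X⟧) - X^(5*n+2) - 1 = -(X^(5*n+2)) from by ring]
      exact (pow_dvd_pow X (by omega)).neg_right
    exact mul_sub_one_dvd (mul_sub_one_dvd hA hB) hC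
  rw [hsplit]
  have hcc : coeff d (T (d+2) * ∏ n ∈ s \ range (d+2),
      ((1 - (X:ℤ⟦X⟧)^(5*n+5)) * (1 - X^(5*n+3)) * (1 - X^(5*n+2))))
      = coeff d (T (d+2)) := by
    apply coeff_eq_of_dvd
    have : T (d+2) * (∏ n ∈ s \ range (d+2),
        ((1 - (X:ℤ⟦X⟧)^(5*n+5)) * (1 - X^(5*n+3)) * (1 - X^(5*n+2)))) - T (d+2)
        = T (d+2) * ((∏ n ∈ s \ range (d+2),
          ((1 - (X:ℤ⟦X⟧)^(5*n+5)) * (1 - X^(5*n+3)) * (1 - X^(5*n+2)))) - 1) := by ring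
    rw [this]
    exact hw.mul_left _
  rw [hcc, coeff_T d, Lser, coeff_mk]

lemma hasSum_jtp : HasSum g Lser := by
  apply tendsto_of_coeff
  intro d
  refine ⟨Finset.Icc (-(d:ℤ)-2) (d+2), fun s hs => ?_⟩
  rw [map_sum, Lser, coeff_mk]
  rw [← Finset.sum_subset hs (fun k _ hknot => coeff_g_eq_zero (by
    have h' : ¬(-(d:ℤ)-2 ≤ k ∧ k ≤ (d:ℤ)+2) := by simpa [Finset.mem_Icc] using hknot
    rw [lt_abs]
    omega))]
  refine Finset.sum_bij' (fun k _ => (k + (d+2)).toNat) (fun j _ => (j:ℤ) - (d+2))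
    ?_ ?_ ?_ ?_ ?_
  · intro k hk
    rw [Finset.mem_Icc] at hk
    rw [mem_range]
    omega
  · intro j hj
    rw [mem_range] at hj
    rw [Finset.mem_Icc]
    omega
  · intro k hk
    rw [Finset.mem_Icc] at hk
    omega
  · intro j hj
    rw [mem_range] at hj
    omega
  · intro k hk
    rw [Finset.mem_Icc] at hk
    have hkk : ((((k + ((d:ℤ)+2)).toNat : ℕ)) : ℤ) - ((d:ℤ)+2) = k := by omega
    rw [hkk]

end JTPaux

open JTPaux in
/-- The specialization `u = q³`, `v = q²` of the Jacobi triple product identity. -/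
theorem jacobi_specialization_two :
    (∏' n : ℕ, ((1 - (X : ℤ⟦X⟧) ^ (5 * n + 5)) * (1 - X ^ (5 * n + 3)) * (1 - X ^ (5 * n + 2))))
      = ∑' k : ℤ, ((-1 : ℤ⟦X⟧) ^ k.natAbs * X ^ (k * (5 * k + 1) / 2).toNat) := by
  have h1 := hasProd_jtp.tprod_eq
  have h2 := hasSum_jtp.tsum_eq
  rw [h1, ← h2]
  rfl
end

section
/- As an identity of formal power series in q: ∏_{n≥0} (1 + q^{2n+1})^8 − ∏_{n≥0} (1 − q^{2n+1})^8 = 16 q ∏_{n≥1} (1 + q^{2n})^8. -/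
open PowerSeries

namespace JacobiAux

open Finset

noncomputable section

local notation "R" => PowerSeries ℤ

/-- Gaussian binomial coefficients in the variable `X ^ 2`. -/
def gb : ℕ → ℕ → R
  | _, 0 => 1
  | 0, _ + 1 => 0
  | n + 1, k + 1 => gb n (k + 1) + X ^ (2 * (n - k)) * gb n k

@[simp] lemma gb_zero_right (n : ℕ) : gb n 0 = 1 := by cases n <;> rfl

@[simp] lemma gb_zero_succ (k : ℕ) : gb 0 (k + 1) = 0 := rfl

lemma gb_succ_succ (n k : ℕ) :
    gb (n + 1) (k + 1) = gb n (k + 1) + X ^ (2 * (n - k)) * gb n k := rfl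

lemma gb_eq_zero : ∀ {n k : ℕ}, n < k → gb n k = 0 := by
  intro n
  induction n with
  | zero => intro k hk; match k, hk with
    | k + 1, _ => rfl
  | succ n ih =>
    intro k hk
    match k, hk with
    | k + 1, hk =>
      rw [gb_succ_succ, ih (by omega), ih (by omega), mul_zero, add_zero]

@[simp] lemma gb_self (n : ℕ) : gb n n = 1 := by
  induction n with
  | zero => rfl
  | succ n ih => rw [gb_succ_succ, gb_eq_zero (by omega), ih, zero_add, Nat.sub_self,
      mul_zero, pow_zero, one_mul]

lemma gb_one_mul (n : ℕ) : gb n 1 * (1 - X ^ 2) = 1 - X ^ (2 * n) := by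
  induction n with
  | zero => simp
  | succ n ih =>
    rw [gb_succ_succ]
    have h : n - 0 = n := by omega
    rw [h, gb_zero_right, mul_one]
    have : (gb n 1 + X ^ (2 * n)) * (1 - X ^ 2) =
        gb n 1 * (1 - X ^ 2) + X ^ (2 * n) - X ^ (2 * n) * X ^ 2 := by ring
    rw [this, ih, ← pow_add]
    have : 2 * n + 2 = 2 * (n + 1) := by ring
    rw [this]; ring

/-- absorption identity -/
lemma gb_absorb : ∀ n k : ℕ, k ≤ n →
    (1 - X ^ (2 * (k + 1))) * gb n (k + 1) = (1 - X ^ (2 * (n - k))) * gb n k := by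
  intro n
  induction n with
  | zero => intro k hk; interval_cases k; simp [gb]
  | succ n ih =>
    intro k hk
    rcases k with _ | k'
    · -- k = 0
      simp only [Nat.sub_zero, gb_zero_right, mul_one]
      linear_combination gb_one_mul (n + 1)
    · -- k = k' + 1
      rcases Nat.lt_or_ge k' n with hlt | hge
      · have h1 : k' + 1 ≤ n := hlt
        obtain ⟨c, rfl⟩ := Nat.exists_eq_add_of_le h1
        have e1 : k' + 1 + c - (k' + 1) = c := by omega
        have e2 : k' + 1 + c - k' = c + 1 := by omega
        have e3 : k' + 1 + c + 1 - (k' + 1) = c + 1 := by omega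
        rw [gb_succ_succ, gb_succ_succ (k' + 1 + c) k', e1, e2, e3]
        have ih1 := ih (k' + 1) h1
        have ih2 := ih k' (by omega)
        rw [e1] at ih1
        rw [e2] at ih2
        linear_combination ih1 + X ^ (2 * (c + 1)) * ih2
      · have hn : n = k' := by omega
        subst hn
        rw [gb_eq_zero (show n + 1 < n + 1 + 1 by omega)]
        simp

/-- second Pascal rule -/
lemma gb_rule2 (n k : ℕ) :
    gb (n + 1) (k + 1) = X ^ (2 * (k + 1)) * gb n (k + 1) + gb n k := by
  rcases le_or_gt k n with hk | hk
  · obtain ⟨c, rfl⟩ := Nat.exists_eq_add_of_le hk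
    have e1 : k + c - k = c := by omega
    rw [gb_succ_succ, e1]
    have ha := gb_absorb (k + c) k hk
    rw [e1] at ha
    linear_combination ha
  · rw [gb_eq_zero (by omega), gb_eq_zero (by omega), gb_eq_zero (by omega)]
    ring

/-- step lemma for the first column -/
lemma gb_one_step (n : ℕ) :
    gb (n + 2) 1 = X ^ 2 * gb n 1 + 1 + X ^ (2 * (n + 1)) := by
  have h1 : gb (n + 2) 1 = gb (n + 1) 1 + X ^ (2 * (n + 1)) := by
    rw [gb_succ_succ]; simp
  have h2 : gb (n + 1) 1 = gb n 1 + X ^ (2 * n) := by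
    rw [gb_succ_succ]; simp
  -- (1 - X^2) * gb n 1 = 1 - X^(2n)  ⇒  gb n 1 + X^(2n) = X^2 gb n 1 + 1
  have h3 := gb_one_mul n
  rw [h1, h2]
  linear_combination h3

/-- quadratic Pascal identity -/
lemma gb_quad (n a : ℕ) (h : a ≤ n) :
    gb (n + 2) (a + 2) = X ^ (2 * (a + 2)) * gb n (a + 2)
      + (1 + X ^ (2 * (n + 1))) * gb n (a + 1) + X ^ (2 * (n - a)) * gb n a := by
  rcases Nat.lt_or_ge a n with hlt | hge
  · obtain ⟨c, rfl⟩ := Nat.exists_eq_add_of_le (show a + 1 ≤ n from hlt)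
    have e1 : a + 1 + c - a = c + 1 := by omega
    have e2 : a + 1 + c - (a + 1) = c := by omega
    have h1 := gb_succ_succ (a + 1 + c + 1) (a + 1)
    have e3 : a + 1 + c + 1 - (a + 1) = c + 1 := by omega
    rw [e3] at h1
    have h2 := gb_succ_succ (a + 1 + c) (a + 1)
    rw [e2] at h2
    have h3 := gb_rule2 (a + 1 + c) a
    have h4 := gb_absorb (a + 1 + c) (a + 1) (by omega)
    rw [e2] at h4
    rw [e1]
    linear_combination h1 + h2 + X ^ (2 * (c + 1)) * h3 + h4
  · have hn : a = n := by omega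
    subst hn
    rw [gb_eq_zero (show a < a + 2 by omega), gb_eq_zero (show a < a + 1 by omega),
      Nat.sub_self]
    simp

/-- product formula -/
lemma gb_prod : ∀ n k : ℕ, k ≤ n →
    (∏ i ∈ range k, (1 - X ^ (2 * (i + 1)))) * gb n k
      = ∏ i ∈ range k, (1 - (X:R) ^ (2 * (n - k + i + 1))) := by
  intro n k
  induction k with
  | zero => simp
  | succ k ih =>
    intro hk
    obtain ⟨c, rfl⟩ := Nat.exists_eq_add_of_le hk
    have e1 : k + 1 + c - (k + 1) = c := by omega
    have e2 : k + 1 + c - k = c + 1 := by omega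
    have habs := gb_absorb (k + 1 + c) k (by omega)
    rw [e2] at habs
    have ihh := ih (by omega)
    rw [e2] at ihh
    rw [e1]
    rw [Finset.prod_range_succ, Finset.prod_range_succ']
    have hre : ∀ i : ℕ, k + 1 + c - (k + 1) + i + 1 = c + i + 1 := by omega
    calc (∏ i ∈ range k, (1 - (X:R) ^ (2 * (i + 1)))) * (1 - X ^ (2 * (k + 1))) * gb (k + 1 + c) (k + 1)
        = (∏ i ∈ range k, (1 - (X:R) ^ (2 * (i + 1)))) * ((1 - X ^ (2 * (k + 1))) * gb (k + 1 + c) (k + 1)) := by ring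
      _ = (∏ i ∈ range k, (1 - (X:R) ^ (2 * (i + 1)))) * ((1 - X ^ (2 * (c + 1))) * gb (k + 1 + c) k) := by rw [habs]
      _ = (1 - X ^ (2 * (c + 1))) * ((∏ i ∈ range k, (1 - (X:R) ^ (2 * (i + 1)))) * gb (k + 1 + c) k) := by ring
      _ = (1 - X ^ (2 * (c + 1))) * ∏ i ∈ range k, (1 - (X:R) ^ (2 * (c + 1 + i + 1))) := by rw [ihh]
      _ = (∏ i ∈ range k, (1 - (X:R) ^ (2 * (c + (i + 1) + 1)))) * (1 - X ^ (2 * (c + 0 + 1))) := by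
            rw [mul_comm]
            congr 1
            apply Finset.prod_congr rfl
            intro i _
            congr 3
            omega

/-- generic finite Jacobi-triple-product style identity -/
lemma JTPgen (W : ℕ → ℕ → R) (d1 d3 : ℕ → R) (G : ℕ → R)
    (hshift : ∀ m a, W (m + 1) (a + 1) = W m a)
    (hC1 : ∀ m a, X ^ (2 * (a + 2)) * W m (a + 1) = d1 m * W m (a + 2))
    (hC3 : ∀ m a, a ≤ 2 * m → X ^ (2 * (2 * m - a)) * W m (a + 1) = d3 m * W m a)
    (hC0 : ∀ m, W (m + 1) 0 = d1 m * W m 0)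
    (hC1' : ∀ m, X ^ 2 * W (m + 1) 1 = d1 m * W m 1)
    (hG0 : G 0 = W 0 0)
    (hG : ∀ m, G (m + 1) = G m * (1 + X ^ (2 * (2 * m + 1)) + d1 m + d3 m)) :
    ∀ m, G m = ∑ a ∈ range (2 * m + 1), gb (2 * m) a * W m a := by
  intro m
  induction m with
  | zero => simpa using hG0
  | succ m ih =>
    have h2m : 2 * (m + 1) = 2 * m + 1 + 1 + 1 - 1 := by omega
    set T : ℕ → R := fun b => gb (2 * m) b * W m b with hT
    have hT1 : T (2 * m + 1) = 0 := by
      simp only [hT]; rw [gb_eq_zero (by omega), zero_mul]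
    have hT2 : T (2 * m + 2) = 0 := by
      simp only [hT]; rw [gb_eq_zero (by omega), zero_mul]
    set Sm : R := ∑ a ∈ range (2 * m + 1), T a with hSm
    -- the new sum
    have key : ∑ a ∈ range (2 * (m + 1) + 1), gb (2 * (m + 1)) a * W (m + 1) a
        = (∑ i ∈ range (2 * m + 1), gb (2 * m + 2) (i + 2) * W (m + 1) (i + 2))
          + gb (2 * m + 2) 1 * W (m + 1) 1 + gb (2 * m + 2) 0 * W (m + 1) 0 := by
      have e : 2 * (m + 1) + 1 = (2 * m + 2) + 1 := by omega
      have e2 : 2 * (m + 1) = 2 * m + 2 := by omega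
      rw [e, e2, Finset.sum_range_succ' (fun a => gb (2 * m + 2) a * W (m + 1) a) (2 * m + 2),
        Finset.sum_range_succ' (fun a => gb (2 * m + 2) (a + 1) * W (m + 1) (a + 1)) (2 * m + 1)]
    have hterm : ∀ i ∈ range (2 * m + 1),
        gb (2 * m + 2) (i + 2) * W (m + 1) (i + 2)
          = d1 m * T (i + 2) + (1 + X ^ (2 * (2 * m + 1))) * T (i + 1) + d3 m * T i := by
      intro i hi
      have hi' : i ≤ 2 * m := by simp at hi; omega
      rw [hshift m (i + 1), gb_quad (2 * m) i hi']
      have c1 := hC1 m i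
      have c3 := hC3 m i hi'
      simp only [hT]
      linear_combination gb (2 * m) (i + 2) * c1 + gb (2 * m) i * c3
    rw [key, Finset.sum_congr rfl hterm]
    have hsplit : ∑ i ∈ range (2 * m + 1),
        (d1 m * T (i + 2) + (1 + X ^ (2 * (2 * m + 1))) * T (i + 1) + d3 m * T i)
        = d1 m * (∑ i ∈ range (2 * m + 1), T (i + 2))
          + (1 + X ^ (2 * (2 * m + 1))) * (∑ i ∈ range (2 * m + 1), T (i + 1))
          + d3 m * Sm := by
      rw [Finset.sum_add_distrib, Finset.sum_add_distrib, ← Finset.mul_sum, ← Finset.mul_sum,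
        ← Finset.mul_sum]
    have hSa : ∑ i ∈ range (2 * m + 1), T (i + 2) = Sm - T 0 - T 1 := by
      have h1 : ∑ i ∈ range (2 * m + 3), T i = (∑ i ∈ range (2 * m + 1), T i)
          + T (2 * m + 1) + T (2 * m + 2) := by
        rw [show 2 * m + 3 = (2 * m + 2) + 1 by omega, Finset.sum_range_succ,
          show 2 * m + 2 = (2 * m + 1) + 1 by omega, Finset.sum_range_succ]
      have h2 : ∑ i ∈ range (2 * m + 3), T i
          = (∑ i ∈ range (2 * m + 1), T (i + 2)) + T 1 + T 0 := by
        rw [show 2 * m + 3 = (2 * m + 2) + 1 by omega,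
          Finset.sum_range_succ' T (2 * m + 2),
          Finset.sum_range_succ' (fun i => T (i + 1)) (2 * m + 1)]
      rw [hT1, hT2] at h1
      rw [← hSm] at h1
      linear_combination h2.symm.trans h1
    have hSb : ∑ i ∈ range (2 * m + 1), T (i + 1) = Sm - T 0 := by
      have h1 : ∑ i ∈ range (2 * m + 2), T i = Sm + T (2 * m + 1) := by
        rw [show 2 * m + 2 = (2 * m + 1) + 1 by omega, Finset.sum_range_succ, hSm]
      have h2 : ∑ i ∈ range (2 * m + 2), T i
          = (∑ i ∈ range (2 * m + 1), T (i + 1)) + T 0 := by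
        rw [show 2 * m + 2 = (2 * m + 1) + 1 by omega, Finset.sum_range_succ' T (2 * m + 1)]
      rw [hT1] at h1
      linear_combination h2.symm.trans h1
    have hf1 : gb (2 * m + 2) 1 * W (m + 1) 1
        = d1 m * T 1 + (1 + X ^ (2 * (2 * m + 1))) * T 0 := by
      rw [gb_one_step (2 * m)]
      have c1 := hC1' m
      have hs0 := hshift m 0
      simp only [hT, gb_zero_right, one_mul]
      linear_combination gb (2 * m) 1 * c1 + (1 + X ^ (2 * (2 * m + 1))) * hs0
    have hf0 : gb (2 * m + 2) 0 * W (m + 1) 0 = d1 m * T 0 := by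
      rw [gb_zero_right, one_mul, hC0]
      simp only [hT, gb_zero_right, one_mul]
    rw [hsplit, hSa, hSb, hf1, hf0, hG, ih]
    ring

def eps (m a : ℕ) : ℕ := (a - m) ^ 2 + (m - a) ^ 2
def eps2 (m a : ℕ) : ℕ := (a - m) * (a + 1 - m) + (m - a) * (m - a - 1)
def Ap (m : ℕ) : R := ∏ k ∈ range m, (1 + X ^ (2 * k + 1))
def Bp (m : ℕ) : R := ∏ k ∈ range m, (1 - X ^ (2 * k + 1))
def Cp (m : ℕ) : R := ∏ k ∈ range m, (1 + X ^ (2 * k + 2))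
def Gp (m : ℕ) : R := ∏ k ∈ range m, ((1 + X ^ (2 * k + 2)) * (1 + X ^ (2 * k)))
def Ep (k : ℕ) : R := ∏ i ∈ range k, (1 - X ^ (2 * (i + 1)))
def S3 (m : ℕ) : R := ∑ a ∈ range (2 * m + 1), X ^ (eps m a)
def S4 (m : ℕ) : R := ∑ a ∈ range (2 * m + 1), (-1 : R) ^ (a + m) * X ^ (eps m a)
def S2 (m : ℕ) : R := ∑ a ∈ range (2 * m + 1), X ^ (eps2 m a)
def T3 (m : ℕ) : R := ∑ a ∈ range (2 * m + 1), X ^ (2 * eps m a)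
def T2 (m : ℕ) : R := ∑ a ∈ range (2 * m + 1), X ^ (2 * eps2 m a)
def BIG (m : ℕ) : Finset (ℕ × ℕ) := range (4 * m + 2) ×ˢ range (4 * m + 2)
def box (m : ℕ) : Finset (ℕ × ℕ) := range (2 * m + 1) ×ˢ range (2 * m + 1)

lemma eps_cast (m a : ℕ) : (eps m a : ℤ) = ((a : ℤ) - m) ^ 2 := by
  rcases le_total m a with h | h
  · have h2 : m - a = 0 := by omega
    rw [eps, h2]
    push_cast [Nat.cast_sub h]
    ring
  · have h2 : a - m = 0 := by omega
    rw [eps, h2]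
    push_cast [Nat.cast_sub h]
    ring

lemma eps2_cast (m a : ℕ) : (eps2 m a : ℤ) = ((a : ℤ) - m) ^ 2 + ((a : ℤ) - m) := by
  rcases le_total m a with h | h
  · have h2 : m - a = 0 := by omega
    have h3 : a + 1 - m = (a - m) + 1 := by omega
    rw [eps2, h2, h3]
    push_cast [Nat.cast_sub h]
    ring
  · rcases Nat.eq_or_lt_of_le h with rfl | h'
    · simp [eps2]
    · have h2 : a - m = 0 := by omega
      have h4 : a + 1 - m = 0 := by omega
      have h5 : m - a - 1 = m - (a + 1) := by omega
      rw [eps2, h2, h4, h5]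
      push_cast [Nat.cast_sub h, Nat.cast_sub (show a + 1 ≤ m by omega)]
      ring

lemma eps_shift (m a : ℕ) : eps (m + 1) (a + 1) = eps m a := by
  simp [eps, Nat.succ_sub_succ]

lemma eps2_shift (m a : ℕ) : eps2 (m + 1) (a + 1) = eps2 m a := by
  simp [eps2, Nat.succ_sub_succ]

lemma Xpow_eq {a b : ℕ} (h : a = b) : (X : R) ^ a = X ^ b := by rw [h]

lemma J3 (m : ℕ) : Ap m ^ 2 = ∑ a ∈ range (2 * m + 1), gb (2 * m) a * X ^ (eps m a) := by
  refine JTPgen (fun m a => X ^ (eps m a)) (fun m => X ^ (2 * m + 1)) (fun m => X ^ (2 * m + 1))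
    (fun m => Ap m ^ 2) ?_ ?_ ?_ ?_ ?_ ?_ ?_ m
  · try dsimp only
    intro m a; exact Xpow_eq (eps_shift m a)
  · try dsimp only
    intro m a
    rw [← pow_add, ← pow_add]
    apply Xpow_eq
    zify
    rw [eps_cast, eps_cast]
    push_cast
    ring
  · try dsimp only
    intro m a ha
    rw [← pow_add, ← pow_add]
    apply Xpow_eq
    zify
    rw [eps_cast, eps_cast]
    push_cast [Nat.cast_sub ha]
    ring
  · try dsimp only
    intro m
    rw [← pow_add]
    apply Xpow_eq
    zify
    rw [eps_cast, eps_cast]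
    push_cast
    ring
  · try dsimp only
    intro m
    rw [← pow_add, ← pow_add]
    apply Xpow_eq
    zify
    rw [eps_cast, eps_cast]
    push_cast
    ring
  · try dsimp only
    simp [Ap, eps]
  · try dsimp only
    intro m
    rw [Ap, Finset.prod_range_succ, ← Ap]
    ring

lemma J4 (m : ℕ) : Bp m ^ 2
    = ∑ a ∈ range (2 * m + 1), gb (2 * m) a * ((-1 : R) ^ (a + m) * X ^ (eps m a)) := by
  refine JTPgen (fun m a => (-1 : R) ^ (a + m) * X ^ (eps m a))
    (fun m => -X ^ (2 * m + 1)) (fun m => -X ^ (2 * m + 1))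
    (fun m => Bp m ^ 2) ?_ ?_ ?_ ?_ ?_ ?_ ?_ m
  · try dsimp only
    intro m a
    rw [eps_shift]
    rw [show a + 1 + (m + 1) = a + m + 2 by omega, pow_add]
    ring
  · try dsimp only
    intro m a
    have h : 2 * (a + 2) + eps m (a + 1) = 2 * m + 1 + eps m (a + 2) := by
      zify; rw [eps_cast, eps_cast]; push_cast; ring
    calc (X : R) ^ (2 * (a + 2)) * ((-1 : R) ^ (a + 1 + m) * X ^ (eps m (a + 1)))
        = (-1 : R) ^ (a + 1 + m) * (X ^ (2 * (a + 2)) * X ^ (eps m (a + 1))) := by ring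
      _ = (-1 : R) ^ (a + 1 + m) * (X ^ (2 * m + 1) * X ^ (eps m (a + 2))) := by
            rw [← pow_add, ← pow_add, Xpow_eq h]
      _ = -X ^ (2 * m + 1) * ((-1 : R) ^ (a + 2 + m) * X ^ (eps m (a + 2))) := by
            rw [show a + 2 + m = (a + 1 + m) + 1 by omega, pow_succ]
            ring
  · try dsimp only
    intro m a ha
    have h : 2 * (2 * m - a) + eps m (a + 1) = 2 * m + 1 + eps m a := by
      zify; rw [eps_cast, eps_cast]; push_cast [Nat.cast_sub ha]; ring
    calc (X : R) ^ (2 * (2 * m - a)) * ((-1 : R) ^ (a + 1 + m) * X ^ (eps m (a + 1)))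
        = (-1 : R) ^ (a + 1 + m) * (X ^ (2 * (2 * m - a)) * X ^ (eps m (a + 1))) := by ring
      _ = (-1 : R) ^ (a + 1 + m) * (X ^ (2 * m + 1) * X ^ (eps m a)) := by
            rw [← pow_add, ← pow_add, Xpow_eq h]
      _ = -X ^ (2 * m + 1) * ((-1 : R) ^ (a + m) * X ^ (eps m a)) := by
            rw [show a + 1 + m = (a + m) + 1 by omega, pow_succ]
            ring
  · try dsimp only
    intro m
    have h : eps (m + 1) 0 = 2 * m + 1 + eps m 0 := by
      zify; rw [eps_cast, eps_cast]; push_cast; ring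
    rw [Xpow_eq h]
    rw [show (0 : ℕ) + (m + 1) = (0 + m) + 1 by omega, pow_succ]
    ring
  · try dsimp only
    intro m
    have h : 2 + eps (m + 1) 1 = 2 * m + 1 + eps m 1 := by
      zify; rw [eps_cast, eps_cast]; push_cast; ring
    calc (X : R) ^ 2 * ((-1 : R) ^ (1 + (m + 1)) * X ^ (eps (m + 1) 1))
        = (-1 : R) ^ (1 + (m + 1)) * (X ^ 2 * X ^ (eps (m + 1) 1)) := by ring
      _ = (-1 : R) ^ (1 + (m + 1)) * (X ^ (2 * m + 1) * X ^ (eps m 1)) := by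
            rw [← pow_add, ← pow_add, Xpow_eq h]
      _ = -X ^ (2 * m + 1) * ((-1 : R) ^ (1 + m) * X ^ (eps m 1)) := by
            rw [show 1 + (m + 1) = (1 + m) + 1 by omega, pow_succ]
            ring
  · try dsimp only
    simp [Bp, eps]
  · try dsimp only
    intro m
    rw [Bp, Finset.prod_range_succ, ← Bp]
    ring

lemma J2 (m : ℕ) : Gp m = ∑ a ∈ range (2 * m + 1), gb (2 * m) a * X ^ (eps2 m a) := by
  refine JTPgen (fun m a => X ^ (eps2 m a)) (fun m => X ^ (2 * m)) (fun m => X ^ (2 * m + 2))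
    Gp ?_ ?_ ?_ ?_ ?_ ?_ ?_ m
  · try dsimp only
    intro m a; exact Xpow_eq (eps2_shift m a)
  · try dsimp only
    intro m a
    rw [← pow_add, ← pow_add]
    apply Xpow_eq
    zify
    rw [eps2_cast, eps2_cast]
    push_cast
    ring
  · try dsimp only
    intro m a ha
    rw [← pow_add, ← pow_add]
    apply Xpow_eq
    zify
    rw [eps2_cast, eps2_cast]
    push_cast [Nat.cast_sub ha]
    ring
  · try dsimp only
    intro m
    rw [← pow_add]
    apply Xpow_eq
    zify
    rw [eps2_cast, eps2_cast]
    push_cast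
    ring
  · try dsimp only
    intro m
    rw [← pow_add, ← pow_add]
    apply Xpow_eq
    zify
    rw [eps2_cast, eps2_cast]
    push_cast
    ring
  · try dsimp only
    simp [Gp, eps2]
  · try dsimp only
    intro m
    rw [Gp, Finset.prod_range_succ, ← Gp]
    ring

lemma dvd_mul_sub_mul {t : ℕ} {a b c d : R} (h1 : (X:R)^t ∣ a - b) (h2 : (X:R)^t ∣ c - d) :
    (X:R)^t ∣ a * c - b * d := by
  have : a * c - b * d = a * (c - d) + d * (a - b) := by ring
  rw [this]
  exact dvd_add (Dvd.dvd.mul_left h2 a) (Dvd.dvd.mul_left h1 d)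

lemma dvd_pow_sub_pow {t : ℕ} {a b : R} (h : (X:R)^t ∣ a - b) (k : ℕ) :
    (X:R)^t ∣ a ^ k - b ^ k := by
  induction k with
  | zero => simp
  | succ k ih =>
    rw [pow_succ, pow_succ]
    exact dvd_mul_sub_mul ih h

lemma prod_one_sub_dvd {t : ℕ} (s : Finset ℕ) (f : ℕ → R)
    (h : ∀ i ∈ s, (X:R)^t ∣ (f i - 1)) : (X:R)^t ∣ (∏ i ∈ s, f i) - 1 := by
  induction s using Finset.induction with
  | empty => simp
  | @insert x s' hx ih =>
    rw [Finset.prod_insert hx]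
    have h1 := h x (Finset.mem_insert_self x s')
    have h2 := ih (fun i hi => h i (Finset.mem_insert_of_mem hi))
    have : f x * ∏ i ∈ s', f i - 1 = f x * ((∏ i ∈ s', f i) - 1) + (f x - 1) := by ring
    rw [this]
    exact dvd_add (Dvd.dvd.mul_left h2 _) h1

lemma Ep_gb_dvd (m a : ℕ) (ha : a ≤ 2 * m) :
    (X:R) ^ (min (2 * a + 2) (2 * (2 * m - a) + 2)) ∣ Ep (2 * m) * gb (2 * m) a - 1 := by
  set t := min (2 * a + 2) (2 * (2 * m - a) + 2) with ht
  have hsplit : Ep (2 * m) = (∏ i ∈ range a, (1 - (X:R) ^ (2 * (i + 1))))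
      * ∏ i ∈ Ico a (2 * m), (1 - (X:R) ^ (2 * (i + 1))) := by
    rw [Ep]
    exact (Finset.prod_range_mul_prod_Ico _ ha).symm
  have hgb := gb_prod (2 * m) a ha
  have key : Ep (2 * m) * gb (2 * m) a
      = (∏ i ∈ Ico a (2 * m), (1 - (X:R) ^ (2 * (i + 1))))
        * ∏ i ∈ range a, (1 - (X:R) ^ (2 * (2 * m - a + i + 1))) := by
    rw [hsplit]
    linear_combination (∏ i ∈ Ico a (2 * m), (1 - (X:R) ^ (2 * (i + 1)))) * hgb
  rw [key]
  have h1 : (X:R)^t ∣ (∏ i ∈ Ico a (2 * m), (1 - (X:R) ^ (2 * (i + 1)))) - 1 := by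
    apply prod_one_sub_dvd
    intro i hi
    have hia : a ≤ i := (Finset.mem_Ico.mp hi).1
    have : (1 - (X:R) ^ (2 * (i + 1))) - 1 = -(X ^ (2 * (i + 1))) := by ring
    rw [this]
    apply Dvd.dvd.neg_right
    exact dvd_trans (pow_dvd_pow X (le_trans (min_le_left _ _) (by omega))) dvd_rfl
  have h2 : (X:R)^t ∣ (∏ i ∈ range a, (1 - (X:R) ^ (2 * (2 * m - a + i + 1)))) - 1 := by
    apply prod_one_sub_dvd
    intro i _
    have : (1 - (X:R) ^ (2 * (2 * m - a + i + 1))) - 1 = -(X ^ (2 * (2 * m - a + i + 1))) := by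
      ring
    rw [this]
    apply Dvd.dvd.neg_right
    exact pow_dvd_pow X (le_trans (min_le_right _ _) (by omega))
  calc (X:R)^t ∣ (∏ i ∈ Ico a (2 * m), (1 - (X:R) ^ (2 * (i + 1))))
        * ((∏ i ∈ range a, (1 - (X:R) ^ (2 * (2 * m - a + i + 1)))) - 1)
        + ((∏ i ∈ Ico a (2 * m), (1 - (X:R) ^ (2 * (i + 1)))) - 1) :=
      dvd_add (Dvd.dvd.mul_left h2 _) h1
    _ = _ := by ring

lemma bound3 (m a : ℕ) (ha : a ≤ 2 * m) :
    2 * m + 1 ≤ min (2 * a + 2) (2 * (2 * m - a) + 2) + eps m a := by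
  rw [← min_add_add_right]
  apply le_min
  · -- 2m+1 ≤ 2a+2 + (a-m)^2
    have h := eps_cast m a
    zify
    nlinarith [sq_nonneg ((a:ℤ) - m + 1), sq_nonneg ((a:ℤ) - m)]
  · have h := eps_cast m a
    have h2 : ((2 * m - a : ℕ) : ℤ) = 2 * (m:ℤ) - a := by
      push_cast [Nat.cast_sub ha]; ring
    zify
    rw [h2]
    nlinarith [sq_nonneg ((a:ℤ) - m - 1), sq_nonneg ((a:ℤ) - m)]

lemma bound2 (m a : ℕ) (ha : a ≤ 2 * m) :
    2 * m ≤ min (2 * a + 2) (2 * (2 * m - a) + 2) + eps2 m a := by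
  rw [← min_add_add_right]
  apply le_min
  · have h := eps2_cast m a
    zify
    nlinarith [sq_nonneg ((a:ℤ) - m + 1), sq_nonneg ((a:ℤ) - m)]
  · have h := eps2_cast m a
    have h2 : ((2 * m - a : ℕ) : ℤ) = 2 * (m:ℤ) - a := by
      push_cast [Nat.cast_sub ha]; ring
    zify
    rw [h2]
    nlinarith [sq_nonneg ((a:ℤ) - m - 2), sq_nonneg ((a:ℤ) - m - 1)]

lemma P3dvd (K m : ℕ) (hK : K ≤ 2 * m + 1) :
    (X:R) ^ K ∣ Ap m ^ 2 * Ep (2 * m) - S3 m := by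
  rw [J3, S3, Finset.sum_mul, ← Finset.sum_sub_distrib]
  apply Finset.dvd_sum
  intro a hain
  have ha : a ≤ 2 * m := by simp at hain; omega
  have h1 : gb (2 * m) a * X ^ (eps m a) * Ep (2 * m) - X ^ (eps m a)
      = X ^ (eps m a) * (Ep (2 * m) * gb (2 * m) a - 1) := by ring
  rw [h1]
  have h2 := Ep_gb_dvd m a ha
  have h3 : (X:R) ^ (eps m a + min (2 * a + 2) (2 * (2 * m - a) + 2))
      ∣ X ^ (eps m a) * (Ep (2 * m) * gb (2 * m) a - 1) := by
    rw [pow_add]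
    exact mul_dvd_mul_left _ h2
  exact dvd_trans (pow_dvd_pow X (by have := bound3 m a ha; omega)) h3

lemma P4dvd (K m : ℕ) (hK : K ≤ 2 * m + 1) :
    (X:R) ^ K ∣ Bp m ^ 2 * Ep (2 * m) - S4 m := by
  rw [J4, S4, Finset.sum_mul, ← Finset.sum_sub_distrib]
  apply Finset.dvd_sum
  intro a hain
  have ha : a ≤ 2 * m := by simp at hain; omega
  have h1 : gb (2 * m) a * ((-1:R) ^ (a + m) * X ^ (eps m a)) * Ep (2 * m)
        - (-1:R) ^ (a + m) * X ^ (eps m a)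
      = (-1:R) ^ (a + m) * (X ^ (eps m a) * (Ep (2 * m) * gb (2 * m) a - 1)) := by ring
  rw [h1]
  apply Dvd.dvd.mul_left
  have h3 : (X:R) ^ (eps m a + min (2 * a + 2) (2 * (2 * m - a) + 2))
      ∣ X ^ (eps m a) * (Ep (2 * m) * gb (2 * m) a - 1) := by
    rw [pow_add]
    exact mul_dvd_mul_left _ (Ep_gb_dvd m a ha)
  exact dvd_trans (pow_dvd_pow X (by have := bound3 m a ha; omega)) h3

lemma P2dvd (K m : ℕ) (hK : K ≤ 2 * m) :
    (X:R) ^ K ∣ Gp m * Ep (2 * m) - S2 m := by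
  rw [J2, S2, Finset.sum_mul, ← Finset.sum_sub_distrib]
  apply Finset.dvd_sum
  intro a hain
  have ha : a ≤ 2 * m := by simp at hain; omega
  have h1 : gb (2 * m) a * X ^ (eps2 m a) * Ep (2 * m) - X ^ (eps2 m a)
      = X ^ (eps2 m a) * (Ep (2 * m) * gb (2 * m) a - 1) := by ring
  rw [h1]
  have h3 : (X:R) ^ (eps2 m a + min (2 * a + 2) (2 * (2 * m - a) + 2))
      ∣ X ^ (eps2 m a) * (Ep (2 * m) * gb (2 * m) a - 1) := by
    rw [pow_add]
    exact mul_dvd_mul_left _ (Ep_gb_dvd m a ha)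
  exact dvd_trans (pow_dvd_pow X (by have := bound2 m a ha; omega)) h3

lemma Cp_sq (m : ℕ) : Gp m * (1 + X ^ (2 * m)) = 2 * Cp m ^ 2 := by
  have haux : ∀ n : ℕ, (∏ k ∈ range n, (1 + (X:R) ^ (2 * k))) * (1 + X ^ (2 * n))
      = 2 * Cp n := by
    intro n
    induction n with
    | zero => norm_num [Cp]
    | succ n ih =>
      rw [Finset.prod_range_succ, Cp, Finset.prod_range_succ, ← Cp]
      calc (∏ k ∈ range n, (1 + (X:R) ^ (2 * k))) * (1 + X ^ (2 * n)) * (1 + X ^ (2 * (n+1)))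
          = 2 * Cp n * (1 + X ^ (2 * (n+1))) := by rw [ih]
        _ = 2 * (Cp n * (1 + X ^ (2 * n + 2))) := by
              rw [show 2 * (n + 1) = 2 * n + 2 by omega]; ring
  have hGp : Gp m = Cp m * ∏ k ∈ range m, (1 + (X:R) ^ (2 * k)) := by
    rw [Gp, Cp, ← Finset.prod_mul_distrib]
  rw [hGp, mul_assoc, haux m]
  ring

lemma P2dvd' (K m : ℕ) (hK : K ≤ 2 * m) :
    (X:R) ^ K ∣ 2 * Cp m ^ 2 * Ep (2 * m) - S2 m := by
  have h1 := P2dvd K m hK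
  have h2 : 2 * Cp m ^ 2 * Ep (2 * m) - S2 m
      = (1 + X ^ (2 * m)) * (Gp m * Ep (2 * m) - S2 m) + X ^ (2 * m) * S2 m := by
    rw [← Cp_sq]; ring
  rw [h2]
  exact dvd_add (Dvd.dvd.mul_left h1 _) (Dvd.dvd.mul_right (pow_dvd_pow X (by omega)) _)

lemma eps_coord_bound (K m p : ℕ) (hm : K + 2 ≤ m) (h : p < m ∨ 3 * m + 1 ≤ p) :
    K ≤ eps (2 * m) p := by
  zify
  rw [eps_cast]
  push_cast
  have h2 : (K : ℤ) + 2 ≤ m := by exact_mod_cast hm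
  rcases h with h | h
  · have h1 : (p : ℤ) < m := by exact_mod_cast h
    nlinarith [sq_nonneg ((p:ℤ) - m)]
  · have h1 : 3 * (m:ℤ) + 1 ≤ p := by exact_mod_cast h
    nlinarith [sq_nonneg ((p:ℤ) - 3 * m)]

lemma eps2_coord_bound (K m p : ℕ) (hm : K + 2 ≤ m) (h : p < m ∨ 3 * m + 1 ≤ p) :
    K ≤ eps2 (2 * m) p := by
  zify
  rw [eps2_cast]
  push_cast
  have h2 : (K : ℤ) + 2 ≤ m := by exact_mod_cast hm
  rcases h with h | h
  · have h1 : (p : ℤ) < m := by exact_mod_cast h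
    nlinarith [sq_nonneg ((p:ℤ) - m)]
  · have h1 : 3 * (m:ℤ) + 1 ≤ p := by exact_mod_cast h
    nlinarith [sq_nonneg ((p:ℤ) - 3 * m)]

lemma pair_bound_eps (K m q1 q2 : ℕ) (hm : K + 2 ≤ m)
    (h : q1 + q2 ≤ 2 * m ∨ 6 * m + 1 ≤ q1 + q2 ∨ q1 + 2 * m < q2 ∨ q2 + 2 * m < q1) :
    K ≤ eps (2 * m) q1 + eps (2 * m) q2 := by
  zify
  rw [eps_cast, eps_cast]
  push_cast
  have h2 : (K : ℤ) + 2 ≤ m := by exact_mod_cast hm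
  rcases h with h | h | h | h
  · have h1 : (q1 : ℤ) + q2 ≤ 2 * m := by exact_mod_cast h
    nlinarith [sq_nonneg ((q1:ℤ) - q2), sq_nonneg ((q1:ℤ) + q2 - 4 * m)]
  · have h1 : 6 * (m:ℤ) + 1 ≤ (q1:ℤ) + q2 := by exact_mod_cast h
    nlinarith [sq_nonneg ((q1:ℤ) - q2), sq_nonneg ((q1:ℤ) + q2 - 4 * m)]
  · have h1 : (q1:ℤ) + 2 * m + 1 ≤ q2 := by exact_mod_cast h
    nlinarith [sq_nonneg ((q1:ℤ) + q2 - 4 * m), sq_nonneg ((q1:ℤ) - q2)]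
  · have h1 : (q2:ℤ) + 2 * m + 1 ≤ q1 := by exact_mod_cast h
    nlinarith [sq_nonneg ((q1:ℤ) + q2 - 4 * m), sq_nonneg ((q1:ℤ) - q2)]

lemma pair_bound_eps2 (K m q1 q2 : ℕ) (hm : K + 2 ≤ m)
    (h : q1 + q2 ≤ 2 * m ∨ 6 * m + 1 ≤ q1 + q2 ∨ q1 + 2 * m < q2 ∨ q2 + 2 * m < q1) :
    K ≤ eps2 (2 * m) q1 + eps2 (2 * m) q2 := by
  zify
  rw [eps2_cast, eps2_cast]
  push_cast
  have h2 : (K : ℤ) + 2 ≤ m := by exact_mod_cast hm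
  have hx0 : (0:ℤ) ≤ q1 := Int.natCast_nonneg q1
  have hy0 : (0:ℤ) ≤ q2 := Int.natCast_nonneg q2
  rcases h with h | h | h | h
  · have h1 : (q1 : ℤ) + q2 ≤ 2 * m := by exact_mod_cast h
    nlinarith [sq_nonneg ((q1:ℤ) - q2), sq_nonneg ((q1:ℤ) + q2 - 4 * m + 1)]
  · have h1 : 6 * (m:ℤ) + 1 ≤ (q1:ℤ) + q2 := by exact_mod_cast h
    nlinarith [sq_nonneg ((q1:ℤ) - q2), sq_nonneg ((q1:ℤ) + q2 - 4 * m + 1)]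
  · have h1 : (q1:ℤ) + 2 * m + 1 ≤ q2 := by exact_mod_cast h
    nlinarith [sq_nonneg ((q1:ℤ) + q2 - 4 * m), sq_nonneg ((q1:ℤ) - q2)]
  · have h1 : (q2:ℤ) + 2 * m + 1 ≤ q1 := by exact_mod_cast h
    nlinarith [sq_nonneg ((q1:ℤ) + q2 - 4 * m), sq_nonneg ((q1:ℤ) - q2)]

lemma sum_sdiff_dvd {s t : Finset (ℕ × ℕ)} (hsub : t ⊆ s) {f : ℕ × ℕ → R} {K : ℕ}
    (hd : ∀ x ∈ s, x ∉ t → (X:R)^K ∣ f x) : (X:R)^K ∣ (∑ x ∈ s, f x) - ∑ x ∈ t, f x := by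
  rw [← Finset.sum_sdiff hsub, add_sub_cancel_right]
  exact Finset.dvd_sum fun x hx => hd x (Finset.mem_sdiff.mp hx).1 (Finset.mem_sdiff.mp hx).2

lemma eps_embed (m a : ℕ) : eps (2 * m) (a + m) = eps m a := by
  have e1 : a + m - 2 * m = a - m := by omega
  have e2 : 2 * m - (a + m) = m - a := by omega
  rw [eps, eps, e1, e2]

lemma eps2_embed (m a : ℕ) : eps2 (2 * m) (a + m) = eps2 m a := by
  have e1 : a + m - 2 * m = a - m := by omega
  have e2 : 2 * m - (a + m) = m - a := by omega
  have e3 : a + m + 1 - 2 * m = a + 1 - m := by omega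
  have e4 : m - a - 1 = m - a - 1 := rfl
  rw [eps2, eps2, e1, e2, e3]

lemma epsQ2 (m u v : ℕ) (hv : v ≤ u + 2 * m) :
    eps (2 * m) (u + v) + eps (2 * m) (u + 2 * m - v) = 2 * eps m u + 2 * eps m v := by
  zify
  rw [eps_cast, eps_cast, eps_cast, eps_cast]
  push_cast [Nat.cast_sub hv]
  ring

lemma epsQ3 (m u v : ℕ) (hv : v ≤ u + 2 * m) :
    eps (2 * m) (u + v + 1) + eps (2 * m) (u + 2 * m - v)
      = 1 + 2 * eps2 m u + 2 * eps2 m v := by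
  zify
  rw [eps_cast, eps_cast, eps2_cast, eps2_cast]
  push_cast [Nat.cast_sub hv]
  ring

lemma epsQ4e (m u v : ℕ) (hv : v ≤ u + 2 * m) :
    eps2 (2 * m) (u + v) + eps2 (2 * m) (u + 2 * m - v) = 2 * eps2 m u + 2 * eps m v := by
  zify
  rw [eps2_cast, eps2_cast, eps2_cast, eps_cast]
  push_cast [Nat.cast_sub hv]
  ring

lemma epsQ4o (m u v : ℕ) (hv : v ≤ u + 2 * m) :
    eps2 (2 * m) (u + v + 1) + eps2 (2 * m) (u + 2 * m - v)
      = 2 * eps m (u + 1) + 2 * eps2 m v := by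
  zify
  rw [eps2_cast, eps2_cast, eps_cast, eps2_cast]
  push_cast [Nat.cast_sub hv]
  ring

lemma Q2 (K m : ℕ) (hm : K + 2 ≤ m) :
    (X:R)^K ∣ (S3 m * S3 m + S4 m * S4 m) - 2 * (T3 m * T3 m) := by
  classical
  set F : ℕ × ℕ → R := fun q => (1 + (-1:R)^(q.1+q.2)) * X^(eps (2*m) q.1 + eps (2*m) q.2)
    with hF
  set ι : ℕ × ℕ → ℕ × ℕ := fun p => (p.1 + m, p.2 + m) with hιdef
  set ψ : ℕ × ℕ → ℕ × ℕ := fun p => (p.1 + p.2, p.1 + 2 * m - p.2) with hψdef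
  have hιinj : ∀ p ∈ box m, ∀ p' ∈ box m, ι p = ι p' → p = p' := by
    intro p _ p' _ hpe
    have h1 := congrArg Prod.fst hpe
    have h2 := congrArg Prod.snd hpe
    simp [hιdef] at h1 h2
    exact Prod.ext h1 h2
  have hψinj : ∀ p ∈ box m, ∀ p' ∈ box m, ψ p = ψ p' → p = p' := by
    intro p hp p' hp' hpe
    simp [box, Finset.mem_product, Finset.mem_range] at hp hp'
    have h1 := congrArg Prod.fst hpe
    have h2 := congrArg Prod.snd hpe
    simp [hψdef] at h1 h2
    have : p.1 = p'.1 ∧ p.2 = p'.2 := by omega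
    exact Prod.ext this.1 this.2
  have hA : S3 m * S3 m + S4 m * S4 m = ∑ q ∈ (box m).image ι, F q := by
    rw [Finset.sum_image hιinj]
    rw [S3, S4, Finset.sum_mul_sum, Finset.sum_mul_sum, box, Finset.sum_product,
      ← Finset.sum_add_distrib]
    apply Finset.sum_congr rfl
    intro a _
    rw [← Finset.sum_add_distrib]
    apply Finset.sum_congr rfl
    intro b _
    simp only [hF, hιdef]
    rw [eps_embed m a, eps_embed m b]
    ring
  have hsub1 : (box m).image ι ⊆ BIG m := by
    intro q hq
    obtain ⟨p, hp, rfl⟩ := Finset.mem_image.mp hq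
    simp [box, Finset.mem_product, Finset.mem_range] at hp
    simp [BIG, hιdef, Finset.mem_product, Finset.mem_range]
    omega
  have hsub2 : (box m).image ψ ⊆ BIG m := by
    intro q hq
    obtain ⟨p, hp, rfl⟩ := Finset.mem_image.mp hq
    simp [box, Finset.mem_product, Finset.mem_range] at hp
    simp [BIG, hψdef, Finset.mem_product, Finset.mem_range]
    omega
  have hB : (X:R)^K ∣ (∑ q ∈ BIG m, F q) - ∑ q ∈ (box m).image ι, F q := by
    apply sum_sdiff_dvd hsub1
    intro q hqB hqni
    have hcoord : q.1 < m ∨ 3*m+1 ≤ q.1 ∨ q.2 < m ∨ 3*m+1 ≤ q.2 := by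
      by_contra hcon
      push_neg at hcon
      obtain ⟨h1, h2, h3, h4⟩ := hcon
      apply hqni
      refine Finset.mem_image.mpr ⟨(q.1 - m, q.2 - m), ?_, ?_⟩
      · simp [BIG, Finset.mem_product, Finset.mem_range] at hqB
        simp [box, Finset.mem_product, Finset.mem_range]
        omega
      · refine Prod.ext ?_ ?_ <;> simp [hιdef] <;> omega
    have hle : K ≤ eps (2*m) q.1 + eps (2*m) q.2 := by
      rcases hcoord with h | h | h | h
      · exact le_trans (eps_coord_bound K m q.1 hm (Or.inl h)) (Nat.le_add_right _ _)
      · exact le_trans (eps_coord_bound K m q.1 hm (Or.inr h)) (Nat.le_add_right _ _)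
      · exact le_trans (eps_coord_bound K m q.2 hm (Or.inl h)) (Nat.le_add_left _ _)
      · exact le_trans (eps_coord_bound K m q.2 hm (Or.inr h)) (Nat.le_add_left _ _)
    exact Dvd.dvd.mul_left (pow_dvd_pow X hle) _
  have hC : (X:R)^K ∣ (∑ q ∈ BIG m, F q) - ∑ q ∈ (box m).image ψ, F q := by
    apply sum_sdiff_dvd hsub2
    intro q hqB hqni
    rcases Nat.even_or_odd (q.1 + q.2) with he | ho
    · have hcases : q.1 + q.2 ≤ 2*m ∨ 6*m+1 ≤ q.1+q.2 ∨ q.1 + 2*m < q.2 ∨ q.2 + 2*m < q.1 := by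
        by_contra hcon
        push_neg at hcon
        obtain ⟨h1, h2, h3, h4⟩ := hcon
        obtain ⟨c, hc⟩ := he
        apply hqni
        refine Finset.mem_image.mpr ⟨(c - m, q.1 - (c - m)), ?_, ?_⟩
        · simp [box, Finset.mem_product, Finset.mem_range]
          omega
        · refine Prod.ext ?_ ?_ <;> simp [hψdef] <;> omega
      have hle := pair_bound_eps K m q.1 q.2 hm hcases
      exact Dvd.dvd.mul_left (pow_dvd_pow X hle) _
    · have hsgn : (-1:R)^(q.1+q.2) = -1 := Odd.neg_one_pow ho
      have hz : F q = 0 := by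
        simp only [hF]
        rw [hsgn]
        ring
      rw [hz]
      exact dvd_zero _
  have hD : ∑ q ∈ (box m).image ψ, F q = 2 * (T3 m * T3 m) := by
    rw [Finset.sum_image hψinj]
    rw [T3, Finset.sum_mul_sum, Finset.mul_sum, box, Finset.sum_product]
    apply Finset.sum_congr rfl
    intro a _
    rw [Finset.mul_sum]
    apply Finset.sum_congr rfl
    intro b hb
    have hb2m : b ≤ 2 * m := by simp [Finset.mem_range] at hb; omega
    have hsgn : (-1:R)^((a+b) + (a + 2*m - b)) = 1 := by
      rw [show (a+b)+(a+2*m-b) = 2*(a+m) by omega, pow_mul]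
      norm_num
    have hexp := epsQ2 m a b (by omega)
    simp only [hF, hψdef]
    rw [hsgn, hexp]
    ring
  have final : (S3 m * S3 m + S4 m * S4 m) - 2 * (T3 m * T3 m)
      = ((∑ q ∈ BIG m, F q) - ∑ q ∈ (box m).image ψ, F q)
        - ((∑ q ∈ BIG m, F q) - ∑ q ∈ (box m).image ι, F q) := by
    rw [hA, ← hD]
    ring
  rw [final]
  exact dvd_sub hC hB

lemma Q3 (K m : ℕ) (hm : K + 2 ≤ m) :
    (X:R)^K ∣ (S3 m * S3 m - S4 m * S4 m) - 2 * X * (T2 m * T2 m) := by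
  classical
  set F : ℕ × ℕ → R := fun q => (1 - (-1:R)^(q.1+q.2)) * X^(eps (2*m) q.1 + eps (2*m) q.2)
    with hF
  set ι : ℕ × ℕ → ℕ × ℕ := fun p => (p.1 + m, p.2 + m) with hιdef
  set ψ : ℕ × ℕ → ℕ × ℕ := fun p => (p.1 + p.2 + 1, p.1 + 2 * m - p.2) with hψdef
  have hιinj : ∀ p ∈ box m, ∀ p' ∈ box m, ι p = ι p' → p = p' := by
    intro p _ p' _ hpe
    have h1 := congrArg Prod.fst hpe
    have h2 := congrArg Prod.snd hpe
    simp [hιdef] at h1 h2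
    exact Prod.ext h1 h2
  have hψinj : ∀ p ∈ box m, ∀ p' ∈ box m, ψ p = ψ p' → p = p' := by
    intro p hp p' hp' hpe
    simp [box, Finset.mem_product, Finset.mem_range] at hp hp'
    have h1 := congrArg Prod.fst hpe
    have h2 := congrArg Prod.snd hpe
    simp [hψdef] at h1 h2
    have : p.1 = p'.1 ∧ p.2 = p'.2 := by omega
    exact Prod.ext this.1 this.2
  have hA : S3 m * S3 m - S4 m * S4 m = ∑ q ∈ (box m).image ι, F q := by
    rw [Finset.sum_image hιinj]
    rw [S3, S4, Finset.sum_mul_sum, Finset.sum_mul_sum, box, Finset.sum_product,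
      ← Finset.sum_sub_distrib]
    apply Finset.sum_congr rfl
    intro a _
    rw [← Finset.sum_sub_distrib]
    apply Finset.sum_congr rfl
    intro b _
    simp only [hF, hιdef]
    rw [eps_embed m a, eps_embed m b]
    ring
  have hsub1 : (box m).image ι ⊆ BIG m := by
    intro q hq
    obtain ⟨p, hp, rfl⟩ := Finset.mem_image.mp hq
    simp [box, Finset.mem_product, Finset.mem_range] at hp
    simp [BIG, hιdef, Finset.mem_product, Finset.mem_range]
    omega
  have hsub2 : (box m).image ψ ⊆ BIG m := by
    intro q hq
    obtain ⟨p, hp, rfl⟩ := Finset.mem_image.mp hq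
    simp [box, Finset.mem_product, Finset.mem_range] at hp
    simp [BIG, hψdef, Finset.mem_product, Finset.mem_range]
    omega
  have hB : (X:R)^K ∣ (∑ q ∈ BIG m, F q) - ∑ q ∈ (box m).image ι, F q := by
    apply sum_sdiff_dvd hsub1
    intro q hqB hqni
    have hcoord : q.1 < m ∨ 3*m+1 ≤ q.1 ∨ q.2 < m ∨ 3*m+1 ≤ q.2 := by
      by_contra hcon
      push_neg at hcon
      obtain ⟨h1, h2, h3, h4⟩ := hcon
      apply hqni
      refine Finset.mem_image.mpr ⟨(q.1 - m, q.2 - m), ?_, ?_⟩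
      · simp [BIG, Finset.mem_product, Finset.mem_range] at hqB
        simp [box, Finset.mem_product, Finset.mem_range]
        omega
      · refine Prod.ext ?_ ?_ <;> simp [hιdef] <;> omega
    have hle : K ≤ eps (2*m) q.1 + eps (2*m) q.2 := by
      rcases hcoord with h | h | h | h
      · exact le_trans (eps_coord_bound K m q.1 hm (Or.inl h)) (Nat.le_add_right _ _)
      · exact le_trans (eps_coord_bound K m q.1 hm (Or.inr h)) (Nat.le_add_right _ _)
      · exact le_trans (eps_coord_bound K m q.2 hm (Or.inl h)) (Nat.le_add_left _ _)
      · exact le_trans (eps_coord_bound K m q.2 hm (Or.inr h)) (Nat.le_add_left _ _)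
    exact Dvd.dvd.mul_left (pow_dvd_pow X hle) _
  have hC : (X:R)^K ∣ (∑ q ∈ BIG m, F q) - ∑ q ∈ (box m).image ψ, F q := by
    apply sum_sdiff_dvd hsub2
    intro q hqB hqni
    rcases Nat.even_or_odd (q.1 + q.2) with he | ho
    · have hsgn : (-1:R)^(q.1+q.2) = 1 := Even.neg_one_pow he
      have hz : F q = 0 := by
        simp only [hF]
        rw [hsgn]
        ring
      rw [hz]
      exact dvd_zero _
    · have hcases : q.1 + q.2 ≤ 2*m ∨ 6*m+1 ≤ q.1+q.2 ∨ q.1 + 2*m < q.2 ∨ q.2 + 2*m < q.1 := by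
        by_contra hcon
        push_neg at hcon
        obtain ⟨h1, h2, h3, h4⟩ := hcon
        obtain ⟨c, hc⟩ := ho
        apply hqni
        refine Finset.mem_image.mpr ⟨(c - m, q.1 - 1 - (c - m)), ?_, ?_⟩
        · simp [box, Finset.mem_product, Finset.mem_range]
          omega
        · refine Prod.ext ?_ ?_ <;> simp [hψdef] <;> omega
      have hle := pair_bound_eps K m q.1 q.2 hm hcases
      exact Dvd.dvd.mul_left (pow_dvd_pow X hle) _
  have hD : ∑ q ∈ (box m).image ψ, F q = 2 * X * (T2 m * T2 m) := by
    rw [Finset.sum_image hψinj]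
    rw [T2, Finset.sum_mul_sum, Finset.mul_sum, box, Finset.sum_product]
    apply Finset.sum_congr rfl
    intro a _
    rw [Finset.mul_sum]
    apply Finset.sum_congr rfl
    intro b hb
    have hb2m : b ≤ 2 * m := by simp [Finset.mem_range] at hb; omega
    have hsgn : (-1:R)^((a+b+1) + (a + 2*m - b)) = -1 := by
      rw [show (a+b+1)+(a+2*m-b) = 2*(a+m)+1 by omega, pow_succ, pow_mul]
      norm_num
    have hexp := epsQ3 m a b (by omega)
    simp only [hF, hψdef]
    rw [hsgn, hexp]
    rw [show (1:ℕ) + 2 * eps2 m a + 2 * eps2 m b = (2 * eps2 m a + 2 * eps2 m b) + 1 by omega]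
    rw [pow_succ, pow_add]
    ring
  have final : (S3 m * S3 m - S4 m * S4 m) - 2 * X * (T2 m * T2 m)
      = ((∑ q ∈ BIG m, F q) - ∑ q ∈ (box m).image ψ, F q)
        - ((∑ q ∈ BIG m, F q) - ∑ q ∈ (box m).image ι, F q) := by
    rw [hA, ← hD]
    ring
  rw [final]
  exact dvd_sub hC hB

lemma Q4 (K m : ℕ) (hm : K + 2 ≤ m) :
    (X:R)^K ∣ S2 m * S2 m - 2 * (T2 m * T3 m) := by
  classical
  set F : ℕ × ℕ → R := fun q => X^(eps2 (2*m) q.1 + eps2 (2*m) q.2) with hF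
  set ι : ℕ × ℕ → ℕ × ℕ := fun p => (p.1 + m, p.2 + m) with hιdef
  set ψ : ℕ × ℕ → ℕ × ℕ := fun p => (p.1 + p.2, p.1 + 2 * m - p.2) with hψdef
  set ψ' : ℕ × ℕ → ℕ × ℕ := fun p => (p.1 + p.2 + 1, p.1 + 2 * m - p.2) with hψ'def
  have hιinj : ∀ p ∈ box m, ∀ p' ∈ box m, ι p = ι p' → p = p' := by
    intro p _ p' _ hpe
    have h1 := congrArg Prod.fst hpe
    have h2 := congrArg Prod.snd hpe
    simp [hιdef] at h1 h2
    exact Prod.ext h1 h2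
  have hψinj : ∀ p ∈ box m, ∀ p' ∈ box m, ψ p = ψ p' → p = p' := by
    intro p hp p' hp' hpe
    simp [box, Finset.mem_product, Finset.mem_range] at hp hp'
    have h1 := congrArg Prod.fst hpe
    have h2 := congrArg Prod.snd hpe
    simp [hψdef] at h1 h2
    have : p.1 = p'.1 ∧ p.2 = p'.2 := by omega
    exact Prod.ext this.1 this.2
  have hψ'inj : ∀ p ∈ box m, ∀ p' ∈ box m, ψ' p = ψ' p' → p = p' := by
    intro p hp p' hp' hpe
    simp [box, Finset.mem_product, Finset.mem_range] at hp hp'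
    have h1 := congrArg Prod.fst hpe
    have h2 := congrArg Prod.snd hpe
    simp [hψ'def] at h1 h2
    have : p.1 = p'.1 ∧ p.2 = p'.2 := by omega
    exact Prod.ext this.1 this.2
  have hA : S2 m * S2 m = ∑ q ∈ (box m).image ι, F q := by
    rw [Finset.sum_image hιinj]
    rw [S2, Finset.sum_mul_sum, box, Finset.sum_product]
    apply Finset.sum_congr rfl
    intro a _
    apply Finset.sum_congr rfl
    intro b _
    simp only [hF, hιdef]
    rw [eps2_embed m a, eps2_embed m b]
    rw [pow_add]
  have hsub1 : (box m).image ι ⊆ BIG m := by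
    intro q hq
    obtain ⟨p, hp, rfl⟩ := Finset.mem_image.mp hq
    simp [box, Finset.mem_product, Finset.mem_range] at hp
    simp [BIG, hιdef, Finset.mem_product, Finset.mem_range]
    omega
  have hsub2 : (box m).image ψ ⊆ BIG m := by
    intro q hq
    obtain ⟨p, hp, rfl⟩ := Finset.mem_image.mp hq
    simp [box, Finset.mem_product, Finset.mem_range] at hp
    simp [BIG, hψdef, Finset.mem_product, Finset.mem_range]
    omega
  have hsub2' : (box m).image ψ' ⊆ BIG m := by
    intro q hq
    obtain ⟨p, hp, rfl⟩ := Finset.mem_image.mp hq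
    simp [box, Finset.mem_product, Finset.mem_range] at hp
    simp [BIG, hψ'def, Finset.mem_product, Finset.mem_range]
    omega
  have hdisj : Disjoint ((box m).image ψ) ((box m).image ψ') := by
    rw [Finset.disjoint_left]
    intro q hq hq'
    obtain ⟨p, hp, hpe⟩ := Finset.mem_image.mp hq
    obtain ⟨p', hp', hpe'⟩ := Finset.mem_image.mp hq'
    simp [box, Finset.mem_product, Finset.mem_range] at hp hp'
    have e1 := congrArg Prod.fst hpe
    have e2 := congrArg Prod.snd hpe
    have e1' := congrArg Prod.fst hpe'
    have e2' := congrArg Prod.snd hpe'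
    simp [hψdef, hψ'def] at e1 e2 e1' e2'
    omega
  have hB : (X:R)^K ∣ (∑ q ∈ BIG m, F q) - ∑ q ∈ (box m).image ι, F q := by
    apply sum_sdiff_dvd hsub1
    intro q hqB hqni
    have hcoord : q.1 < m ∨ 3*m+1 ≤ q.1 ∨ q.2 < m ∨ 3*m+1 ≤ q.2 := by
      by_contra hcon
      push_neg at hcon
      obtain ⟨h1, h2, h3, h4⟩ := hcon
      apply hqni
      refine Finset.mem_image.mpr ⟨(q.1 - m, q.2 - m), ?_, ?_⟩
      · simp [BIG, Finset.mem_product, Finset.mem_range] at hqB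
        simp [box, Finset.mem_product, Finset.mem_range]
        omega
      · refine Prod.ext ?_ ?_ <;> simp [hιdef] <;> omega
    have hle : K ≤ eps2 (2*m) q.1 + eps2 (2*m) q.2 := by
      rcases hcoord with h | h | h | h
      · exact le_trans (eps2_coord_bound K m q.1 hm (Or.inl h)) (Nat.le_add_right _ _)
      · exact le_trans (eps2_coord_bound K m q.1 hm (Or.inr h)) (Nat.le_add_right _ _)
      · exact le_trans (eps2_coord_bound K m q.2 hm (Or.inl h)) (Nat.le_add_left _ _)
      · exact le_trans (eps2_coord_bound K m q.2 hm (Or.inr h)) (Nat.le_add_left _ _)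
    exact dvd_trans (pow_dvd_pow X hle) dvd_rfl
  have hC : (X:R)^K ∣ (∑ q ∈ BIG m, F q)
      - ∑ q ∈ ((box m).image ψ) ∪ ((box m).image ψ'), F q := by
    apply sum_sdiff_dvd
    · intro q hq
      rcases Finset.mem_union.mp hq with h | h
      · exact hsub2 h
      · exact hsub2' h
    intro q hqB hqni
    have hqni1 : q ∉ (box m).image ψ := fun h => hqni (Finset.mem_union_left _ h)
    have hqni2 : q ∉ (box m).image ψ' := fun h => hqni (Finset.mem_union_right _ h)
    have hcases : q.1 + q.2 ≤ 2*m ∨ 6*m+1 ≤ q.1+q.2 ∨ q.1 + 2*m < q.2 ∨ q.2 + 2*m < q.1 := by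
      rcases Nat.even_or_odd (q.1 + q.2) with he | ho
      · by_contra hcon
        push_neg at hcon
        obtain ⟨h1, h2, h3, h4⟩ := hcon
        obtain ⟨c, hc⟩ := he
        apply hqni1
        refine Finset.mem_image.mpr ⟨(c - m, q.1 - (c - m)), ?_, ?_⟩
        · simp [box, Finset.mem_product, Finset.mem_range]
          omega
        · refine Prod.ext ?_ ?_ <;> simp [hψdef] <;> omega
      · by_contra hcon
        push_neg at hcon
        obtain ⟨h1, h2, h3, h4⟩ := hcon
        obtain ⟨c, hc⟩ := ho
        apply hqni2
        refine Finset.mem_image.mpr ⟨(c - m, q.1 - 1 - (c - m)), ?_, ?_⟩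
        · simp [box, Finset.mem_product, Finset.mem_range]
          omega
        · refine Prod.ext ?_ ?_ <;> simp [hψ'def] <;> omega
    have hle := pair_bound_eps2 K m q.1 q.2 hm hcases
    simp only [hF]
    exact pow_dvd_pow X hle
  have hsplit : ∑ q ∈ ((box m).image ψ) ∪ ((box m).image ψ'), F q
      = (∑ q ∈ (box m).image ψ, F q) + ∑ q ∈ (box m).image ψ', F q :=
    Finset.sum_union hdisj
  have hDe : ∑ q ∈ (box m).image ψ, F q = T2 m * T3 m := by
    rw [Finset.sum_image hψinj, T2, T3, Finset.sum_mul_sum, box, Finset.sum_product]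
    apply Finset.sum_congr rfl
    intro a _
    apply Finset.sum_congr rfl
    intro b hb
    have hb2m : b ≤ 2 * m := by simp [Finset.mem_range] at hb; omega
    simp only [hF, hψdef]
    rw [epsQ4e m a b (by omega), pow_add]
  have hDo : ∑ q ∈ (box m).image ψ', F q
      = (∑ a ∈ range (2*m+1), (X:R)^(2 * eps m (a+1))) * T2 m := by
    rw [Finset.sum_image hψ'inj, T2, Finset.sum_mul_sum, box, Finset.sum_product]
    apply Finset.sum_congr rfl
    intro a _
    apply Finset.sum_congr rfl
    intro b hb
    have hb2m : b ≤ 2 * m := by simp [Finset.mem_range] at hb; omega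
    simp only [hF, hψ'def]
    rw [epsQ4o m a b (by omega), pow_add]
  have hU : (X:R)^K ∣ (∑ a ∈ range (2*m+1), (X:R)^(2 * eps m (a+1))) - T3 m := by
    have h1 : ∑ a ∈ range (2*m+2), (X:R)^(2*eps m a)
        = (∑ a ∈ range (2*m+1), (X:R)^(2*eps m (a+1))) + X^(2*eps m 0) :=
      Finset.sum_range_succ' _ (2*m+1)
    have h2 : ∑ a ∈ range (2*m+2), (X:R)^(2*eps m a) = T3 m + X^(2*eps m (2*m+1)) := by
      rw [T3, ← Finset.sum_range_succ (fun a => (X:R)^(2*eps m a)) (2*m+1)]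
    have h3 : (∑ a ∈ range (2*m+1), (X:R)^(2*eps m (a+1))) - T3 m
        = X^(2*eps m (2*m+1)) - X^(2*eps m 0) := by
      linear_combination h2 - h1
    rw [h3]
    have b1 : K ≤ 2 * eps m (2*m+1) := by
      zify
      rw [eps_cast]
      push_cast
      have h2' : (K : ℤ) + 2 ≤ m := by exact_mod_cast hm
      nlinarith [sq_nonneg ((m:ℤ) + 1)]
    have b2 : K ≤ 2 * eps m 0 := by
      zify
      rw [eps_cast]
      push_cast
      have h2' : (K : ℤ) + 2 ≤ m := by exact_mod_cast hm
      nlinarith [sq_nonneg (m:ℤ)]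
    exact dvd_sub (pow_dvd_pow X b1) (pow_dvd_pow X b2)
  have final : S2 m * S2 m - 2 * (T2 m * T3 m)
      = (((∑ q ∈ BIG m, F q) - ∑ q ∈ ((box m).image ψ) ∪ ((box m).image ψ'), F q)
          - ((∑ q ∈ BIG m, F q) - ∑ q ∈ (box m).image ι, F q))
        + ((∑ a ∈ range (2*m+1), (X:R)^(2 * eps m (a+1))) - T3 m) * T2 m := by
    rw [hA, hsplit, hDe, hDo]
    ring
  rw [final]
  exact dvd_add (dvd_sub hC hB) (Dvd.dvd.mul_right hU _)

lemma mainCong (K : ℕ) :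
    (X:R)^K ∣ Ap (K + 2) ^ 8 - Bp (K + 2) ^ 8 - 16 * X * Cp (K + 2) ^ 8 := by
  set m := K + 2 with hmdef
  have hm : K + 2 ≤ m := le_refl _
  -- fourth powers of the P congruences
  have hP3 : (X:R)^K ∣ Ap m ^ 8 * Ep (2*m) ^ 4 - S3 m ^ 4 := by
    have h := dvd_pow_sub_pow (P3dvd K m (by omega)) 4
    have e : (Ap m ^ 2 * Ep (2*m)) ^ 4 = Ap m ^ 8 * Ep (2*m) ^ 4 := by ring
    rwa [e] at h
  have hP4 : (X:R)^K ∣ Bp m ^ 8 * Ep (2*m) ^ 4 - S4 m ^ 4 := by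
    have h := dvd_pow_sub_pow (P4dvd K m (by omega)) 4
    have e : (Bp m ^ 2 * Ep (2*m)) ^ 4 = Bp m ^ 8 * Ep (2*m) ^ 4 := by ring
    rwa [e] at h
  have hP2 : (X:R)^K ∣ 16 * Cp m ^ 8 * Ep (2*m) ^ 4 - S2 m ^ 4 := by
    have h := dvd_pow_sub_pow (P2dvd' K m (by omega)) 4
    have e : (2 * Cp m ^ 2 * Ep (2*m)) ^ 4 = 16 * Cp m ^ 8 * Ep (2*m) ^ 4 := by ring
    rwa [e] at h
  -- quartic theta identity
  have hQ : (X:R)^K ∣ S3 m ^ 4 - S4 m ^ 4 - X * S2 m ^ 4 := by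
    have h1 := dvd_mul_sub_mul (Q3 K m hm) (Q2 K m hm)
    have h2 := dvd_mul_sub_mul (Q4 K m hm) (Q4 K m hm)
    have e : S3 m ^ 4 - S4 m ^ 4 - X * S2 m ^ 4
        = ((S3 m * S3 m - S4 m * S4 m) * (S3 m * S3 m + S4 m * S4 m)
            - (2 * X * (T2 m * T2 m)) * (2 * (T3 m * T3 m)))
          - X * ((S2 m * S2 m) * (S2 m * S2 m) - (2 * (T2 m * T3 m)) * (2 * (T2 m * T3 m))) := by
      ring
    rw [e]
    exact dvd_sub h1 (Dvd.dvd.mul_left h2 X)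
  -- combine everything
  have hcomb : (X:R)^K ∣ (Ap m ^ 8 - Bp m ^ 8 - 16 * X * Cp m ^ 8) * Ep (2*m) ^ 4 := by
    have e : (Ap m ^ 8 - Bp m ^ 8 - 16 * X * Cp m ^ 8) * Ep (2*m) ^ 4
        = (Ap m ^ 8 * Ep (2*m) ^ 4 - S3 m ^ 4)
          - (Bp m ^ 8 * Ep (2*m) ^ 4 - S4 m ^ 4)
          - X * (16 * Cp m ^ 8 * Ep (2*m) ^ 4 - S2 m ^ 4)
          + (S3 m ^ 4 - S4 m ^ 4 - X * S2 m ^ 4) := by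
      ring
    rw [e]
    exact dvd_add (dvd_sub (dvd_sub hP3 hP4) (Dvd.dvd.mul_left hP2 X)) hQ
  -- cancel the unit Ep (2m) ^ 4
  have hE1 : constantCoeff (Ep (2*m)) = 1 := by
    rw [Ep, map_prod]
    have h : ∀ i ∈ range (2*m), constantCoeff (1 - (X : ℤ⟦X⟧) ^ (2 * (i + 1))) = 1 := by
      intro i _
      rw [map_sub, map_one, map_pow, constantCoeff_X, zero_pow (by omega)]
      ring
    rw [Finset.prod_congr rfl h, Finset.prod_const_one]
  have hE4 : constantCoeff (Ep (2*m) ^ 4) = ((1 : ℤˣ) : ℤ) := by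
    rw [map_pow, hE1]
    norm_num
  have hinv : Ep (2*m) ^ 4 * PowerSeries.invOfUnit (Ep (2*m) ^ 4) 1 = 1 :=
    PowerSeries.mul_invOfUnit _ _ hE4
  have : Ap m ^ 8 - Bp m ^ 8 - 16 * X * Cp m ^ 8
      = ((Ap m ^ 8 - Bp m ^ 8 - 16 * X * Cp m ^ 8) * Ep (2*m) ^ 4)
        * PowerSeries.invOfUnit (Ep (2*m) ^ 4) 1 := by
    linear_combination (-(Ap m ^ 8 - Bp m ^ 8 - 16 * X * Cp m ^ 8)) * hinv
  rw [this]
  exact Dvd.dvd.mul_right hcomb _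

lemma coeff_prod_stable (f : ℕ → R) (hf : ∀ n, (X:R)^(n+1) ∣ (f n - 1)) (d : ℕ)
    (s : Finset ℕ) (hs : range (d+1) ⊆ s) :
    coeff d (∏ n ∈ s, f n) = coeff d (∏ n ∈ range (d+1), f n) := by
  have hsplit : (∏ n ∈ s \ range (d+1), f n) * ∏ n ∈ range (d+1), f n = ∏ n ∈ s, f n :=
    Finset.prod_sdiff hs
  have hdvd : (X:R)^(d+1) ∣ (∏ n ∈ s \ range (d+1), f n) - 1 := by
    apply prod_one_sub_dvd
    intro i hi
    have hilarge : d + 1 ≤ i := by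
      have := (Finset.mem_sdiff.mp hi).2
      simp [Finset.mem_range] at this
      omega
    exact dvd_trans (pow_dvd_pow X (by omega)) (hf i)
  have e : (∏ n ∈ s, f n) - (∏ n ∈ range (d+1), f n)
      = (∏ n ∈ range (d+1), f n) * ((∏ n ∈ s \ range (d+1), f n) - 1) := by
    rw [← hsplit]; ring
  have hd2 : (X:R)^(d+1) ∣ (∏ n ∈ s, f n) - (∏ n ∈ range (d+1), f n) := by
    rw [e]; exact Dvd.dvd.mul_left hdvd _
  have h0 := PowerSeries.X_pow_dvd_iff.mp hd2 d (lt_add_one d)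
  rw [map_sub] at h0
  linarith [h0]

lemma hasProd_of (f : ℕ → R) (hf : ∀ n, (X:R)^(n+1) ∣ (f n - 1)) :
    HasProd f (PowerSeries.mk fun d => coeff d (∏ n ∈ range (d+1), f n)) := by
  rw [HasProd]
  apply tendsto_pi_nhds.mpr
  intro d
  set n := d () with hn
  have hd : d = Finsupp.single () n := by
    rw [hn]
    exact (Finsupp.unique_single d).trans rfl
  have happ : ∀ φ : R, (φ : (Unit →₀ ℕ) → ℤ) d = coeff n φ := by
    intro φ
    rw [hd]
    rfl
  have hev : ∀ᶠ s in Filter.atTop,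
      ((∏ i ∈ s, f i : R) : (Unit →₀ ℕ) → ℤ) d
        = ((PowerSeries.mk fun e => coeff e (∏ i ∈ range (e+1), f i) : R)
            : (Unit →₀ ℕ) → ℤ) d := by
    rw [Filter.eventually_atTop]
    refine ⟨range (n+1), fun s hs => ?_⟩
    rw [happ (∏ i ∈ s, f i),
      happ (PowerSeries.mk fun e => coeff e (∏ i ∈ range (e+1), f i)), coeff_mk]
    exact coeff_prod_stable f hf n s hs
  exact Filter.Tendsto.congr' (Filter.EventuallyEq.symm hev) tendsto_const_nhds

end

end JacobiAux

open JacobiAux Finset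

/-- Jacobi's identity for eighth powers of the classical theta products. -/
theorem jacobi_eighth_powers :
    (∏' n : ℕ, (1 + (X : ℤ⟦X⟧) ^ (2 * n + 1)) ^ 8)
        - (∏' n : ℕ, (1 - (X : ℤ⟦X⟧) ^ (2 * n + 1)) ^ 8)
      = 16 * X * ∏' n : ℕ, (1 + (X : ℤ⟦X⟧) ^ (2 * n + 2)) ^ 8 := by
  classical
  haveI : T2Space (PowerSeries ℤ) := inferInstanceAs (T2Space ((Unit →₀ ℕ) → ℤ))
  set f1 : ℕ → ℤ⟦X⟧ := fun n => (1 + X ^ (2 * n + 1)) ^ 8 with hf1def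
  set f2 : ℕ → ℤ⟦X⟧ := fun n => (1 - X ^ (2 * n + 1)) ^ 8 with hf2def
  set f3 : ℕ → ℤ⟦X⟧ := fun n => (1 + X ^ (2 * n + 2)) ^ 8 with hf3def
  have hd1 : ∀ n, (X:ℤ⟦X⟧)^(n+1) ∣ (f1 n - 1) := by
    intro n
    have h0 : (X:ℤ⟦X⟧)^(n+1) ∣ (1 + X ^ (2 * n + 1)) - 1 := by
      simp only [add_sub_cancel_left]
      exact pow_dvd_pow X (by omega)
    have := dvd_pow_sub_pow h0 8
    simpa using this
  have hd2 : ∀ n, (X:ℤ⟦X⟧)^(n+1) ∣ (f2 n - 1) := by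
    intro n
    have h0 : (X:ℤ⟦X⟧)^(n+1) ∣ (1 - X ^ (2 * n + 1)) - 1 := by
      simp only [sub_sub_cancel_left]
      exact Dvd.dvd.neg_right (pow_dvd_pow X (by omega))
    have := dvd_pow_sub_pow h0 8
    simpa using this
  have hd3 : ∀ n, (X:ℤ⟦X⟧)^(n+1) ∣ (f3 n - 1) := by
    intro n
    have h0 : (X:ℤ⟦X⟧)^(n+1) ∣ (1 + X ^ (2 * n + 2)) - 1 := by
      simp only [add_sub_cancel_left]
      exact pow_dvd_pow X (by omega)
    have := dvd_pow_sub_pow h0 8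
    simpa using this
  set P1 : ℤ⟦X⟧ := PowerSeries.mk fun d => coeff d (∏ n ∈ range (d+1), f1 n) with hP1
  set P2 : ℤ⟦X⟧ := PowerSeries.mk fun d => coeff d (∏ n ∈ range (d+1), f2 n) with hP2
  set P3 : ℤ⟦X⟧ := PowerSeries.mk fun d => coeff d (∏ n ∈ range (d+1), f3 n) with hP3
  have ht1 : ∏' n, f1 n = P1 := (hasProd_of f1 hd1).tprod_eq
  have ht2 : ∏' n, f2 n = P2 := (hasProd_of f2 hd2).tprod_eq
  have ht3 : ∏' n, f3 n = P3 := (hasProd_of f3 hd3).tprod_eq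
  -- products over range m
  have hprod1 : ∀ m, ∏ n ∈ range m, f1 n = Ap m ^ 8 := by
    intro m; rw [Ap, ← Finset.prod_pow]
  have hprod2 : ∀ m, ∏ n ∈ range m, f2 n = Bp m ^ 8 := by
    intro m; rw [Bp, ← Finset.prod_pow]
  have hprod3 : ∀ m, ∏ n ∈ range m, f3 n = Cp m ^ 8 := by
    intro m; rw [Cp, ← Finset.prod_pow]
  -- X^K divides P - (finite product) for m ≥ K
  have hstab : ∀ (f : ℕ → ℤ⟦X⟧), (∀ n, (X:ℤ⟦X⟧)^(n+1) ∣ (f n - 1)) → ∀ K m : ℕ, K ≤ m →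
      (X:ℤ⟦X⟧)^K ∣ (PowerSeries.mk fun d => coeff d (∏ n ∈ range (d+1), f n))
        - ∏ n ∈ range m, f n := by
    intro f hf K m hKm
    rw [PowerSeries.X_pow_dvd_iff]
    intro e he
    rw [map_sub, coeff_mk]
    have h1 : coeff e (∏ n ∈ range m, f n) = coeff e (∏ n ∈ range (e+1), f n) :=
      coeff_prod_stable f hf e (range m) (by
        apply Finset.range_subset_range.mpr
        omega)
    rw [h1, sub_self]
  -- the main divisibility for the limits
  have hdvdG : ∀ K : ℕ, (X:ℤ⟦X⟧)^K ∣ P1 - P2 - 16 * X * P3 := by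
    intro K
    have h1 := hstab f1 hd1 K (K+2) (by omega)
    have h2 := hstab f2 hd2 K (K+2) (by omega)
    have h3 := hstab f3 hd3 K (K+2) (by omega)
    rw [hprod1, ← hP1] at h1
    rw [hprod2, ← hP2] at h2
    rw [hprod3, ← hP3] at h3
    have hmc := mainCong K
    have e : P1 - P2 - 16 * X * P3
        = (P1 - Ap (K+2) ^ 8) - (P2 - Bp (K+2) ^ 8) - 16 * X * (P3 - Cp (K+2) ^ 8)
          + (Ap (K + 2) ^ 8 - Bp (K + 2) ^ 8 - 16 * X * Cp (K + 2) ^ 8) := by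
      ring
    rw [e]
    exact dvd_add (dvd_sub (dvd_sub h1 h2) (Dvd.dvd.mul_left h3 _)) hmc
  have hG0 : P1 - P2 - 16 * X * P3 = 0 := by
    ext d
    rw [map_zero]
    exact PowerSeries.X_pow_dvd_iff.mp (hdvdG (d+1)) d (lt_add_one d)
  rw [ht1, ht2, ht3]
  linear_combination hG0
end
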